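/- arXiv:1208.0692 — 4 statements merged into one kernel-verified Lean document; each statement's English description precedes it below -/
import Mathlib

section
/- For any two orthogonal projectors Q and R on a finite-dimensional Hilbert space, the operator norm of Q + R is at most 1 plus the operator norm of QR. -/
open Matrix

/-- The operator norm (largest singular value) of a square complex matrix. -/
noncomputable def opNorm {ι : Type*} [Fintype ι] [DecidableEq ι] (A : Matrix ι ι ℂ) : ℝ :=
  ‖Matrix.toEuclideanCLM (𝕜 := ℂ) A‖

open ContinuousLinearMap in
lemma proj_sum_norm_aux {E : Type*} [NormedAddCommGroup E] [InnerProductSpace ℂ E]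
    [CompleteSpace E] (q r : E →L[ℂ] E)
    (hq : ContinuousLinearMap.adjoint q = q) (hq2 : q ∘L q = q)
    (hr : ContinuousLinearMap.adjoint r = r) (hr2 : r ∘L r = r) :
    ‖q + r‖ ≤ 1 + ‖q ∘L r‖ := by
  have hc : (0:ℝ) ≤ ‖q ∘L r‖ := norm_nonneg _
  refine (q + r).opNorm_le_bound (by linarith) (fun x => ?_)
  set a := ‖q x‖ with ha
  set b := ‖r x‖ with hb
  set t := ‖(q + r) x‖ with ht
  set c := ‖q ∘L r‖ with hcc
  have hip : ∀ (p : E →L[ℂ] E), ContinuousLinearMap.adjoint p = p → ∀ u v : E,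
      (inner ℂ (p u) v : ℂ) = inner ℂ u (p v) := by
    intro p hp u v
    conv_lhs => rw [← hp]
    exact ContinuousLinearMap.adjoint_inner_left p v u
  have key : ∀ (p : E →L[ℂ] E), ContinuousLinearMap.adjoint p = p → p ∘L p = p →
      (inner ℂ x (p x) : ℂ) = (‖p x‖ : ℂ) ^ 2 := by
    intro p hp hp2
    have hpx : p x = p (p x) := by rw [← ContinuousLinearMap.comp_apply, hp2]
    calc (inner ℂ x (p x) : ℂ) = inner ℂ x (p (p x)) := by rw [← hpx]
      _ = inner ℂ (p x) (p x) := (hip p hp x (p x)).symm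
      _ = (‖p x‖ : ℂ) ^ 2 := inner_self_eq_norm_sq_to_K (𝕜 := ℂ) (p x)
  have h1 : a ^ 2 + b ^ 2 ≤ t * ‖x‖ := by
    have e1 : (inner ℂ x ((q + r) x) : ℂ) = (a:ℂ)^2 + (b:ℂ)^2 := by
      simp only [ContinuousLinearMap.add_apply, inner_add_right, key q hq hq2, key r hr hr2]
      rw [ha, hb]
    have e2 : ‖(inner ℂ x ((q + r) x) : ℂ)‖ ≤ ‖x‖ * t := by
      exact norm_inner_le_norm (𝕜 := ℂ) x ((q + r) x)
    rw [e1] at e2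
    have e3 : ‖(a:ℂ)^2 + (b:ℂ)^2‖ = a^2 + b^2 := by
      rw [← Complex.ofReal_pow, ← Complex.ofReal_pow, ← Complex.ofReal_add,
        Complex.norm_real, Real.norm_eq_abs, abs_of_nonneg (by positivity)]
    rw [e3] at e2; linarith [e2]
  have h2 : (inner ℂ (q x) (r x) : ℂ).re ≤ c * (a * b) := by
    have e1 : (inner ℂ (q x) (r x) : ℂ) = inner ℂ (q x) ((q ∘L r) (r x)) := by
      have hcomp : (q ∘L r) (r x) = q (r x) := by
        rw [ContinuousLinearMap.comp_apply, ← ContinuousLinearMap.comp_apply r r, hr2]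
      calc (inner ℂ (q x) (r x) : ℂ)
          = inner ℂ (q (q x)) (r x) := by rw [← ContinuousLinearMap.comp_apply, hq2]
        _ = inner ℂ (q x) (q (r x)) := hip q hq (q x) (r x)
        _ = inner ℂ (q x) ((q ∘L r) (r x)) := by rw [hcomp]
    have e2 : ‖(inner ℂ (q x) (r x) : ℂ)‖ ≤ a * (c * b) := by
      rw [e1]
      calc ‖(inner ℂ (q x) ((q ∘L r) (r x)) : ℂ)‖
          ≤ ‖q x‖ * ‖(q ∘L r) (r x)‖ := by
            simpa using norm_inner_le_norm (𝕜 := ℂ) (q x) ((q ∘L r) (r x))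
        _ ≤ a * (c * b) := by
            apply mul_le_mul_of_nonneg_left _ (norm_nonneg _)
            exact (q ∘L r).le_opNorm (r x)
    have e3 := Complex.re_le_norm (inner ℂ (q x) (r x) : ℂ)
    linarith [e3, e2]
  have h3 : t ^ 2 ≤ (1 + c) * (a ^ 2 + b ^ 2) := by
    have e : t ^ 2 = a ^ 2 + 2 * (inner ℂ (q x) (r x) : ℂ).re + b ^ 2 := by
      rw [ht, ContinuousLinearMap.add_apply]
      exact norm_add_sq (𝕜 := ℂ) (q x) (r x)
    nlinarith [sq_nonneg (a - b), h2]
  nlinarith [norm_nonneg x, ht ▸ norm_nonneg ((q + r) x), h1, h3, sq_nonneg t,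
    mul_nonneg hc (norm_nonneg x)]

/-- For any two orthogonal projectors `Q` and `R` on a finite-dimensional Hilbert space,
`‖Q + R‖_∞ ≤ 1 + ‖Q R‖_∞`. -/
theorem projector_sum_norm_le {N : ℕ} (Q R : Matrix (Fin N) (Fin N) ℂ)
    (hQherm : Qᴴ = Q) (hQidem : Q * Q = Q)
    (hRherm : Rᴴ = R) (hRidem : R * R = R) :
    opNorm (Q + R) ≤ 1 + opNorm (Q * R) := by
  set q := Matrix.toEuclideanCLM (𝕜 := ℂ) Q with hqdef
  set r := Matrix.toEuclideanCLM (𝕜 := ℂ) R with hrdef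
  have hq : ContinuousLinearMap.adjoint q = q := by
    rw [← ContinuousLinearMap.star_eq_adjoint, hqdef, ← map_star]
    simp only [Matrix.star_eq_conjTranspose, hQherm]
  have hr : ContinuousLinearMap.adjoint r = r := by
    rw [← ContinuousLinearMap.star_eq_adjoint, hrdef, ← map_star]
    simp only [Matrix.star_eq_conjTranspose, hRherm]
  have hq2 : q ∘L q = q := by
    rw [show q ∘L q = q * q from rfl, hqdef, ← _root_.map_mul, hQidem]
  have hr2 : r ∘L r = r := by
    rw [show r ∘L r = r * r from rfl, hrdef, ← _root_.map_mul, hRidem]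
  have := proj_sum_norm_aux q r hq hq2 hr hr2
  unfold _root_.opNorm
  rw [map_add, show Matrix.toEuclideanCLM (𝕜 := ℂ) (Q * R) = q ∘L r by
    rw [_root_.map_mul]; rfl]
  exact this
end

section
/- Let |ψ_π⟩ := (I ⊗ V(π))|Φ⟩ where |Φ⟩ is the maximally entangled state on (ℂ^{d^n})^{⊗t} ⊗ (ℂ^{d^n})^{⊗t} and V(π) is the permutation representation of π ∈ S_t on (ℂ^{d^n})^{⊗t}. Then for every σ ∈ S_t, ∑_{π∈S_t} |⟨ψ_σ|ψ_π⟩| = t!·dim(∨^t ℂ^{d^n})/d^{tn}, and if t² ≤ d^n this sum is at most 1 + t²/d^n. -/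
open Matrix

/-- The symmetric subspace `∨^t ℂ^M` of `(ℂ^M)^{⊗t}`. -/
noncomputable def symSubspace (M t : ℕ) : Submodule ℂ ((Fin t → Fin M) → ℂ) where
  carrier := {v | ∀ (π : Equiv.Perm (Fin t)) (x : Fin t → Fin M), v (x ∘ π) = v x}
  add_mem' := by
    intro a b ha hb π x
    simp [ha π x, hb π x]
  zero_mem' := by
    intro π x
    rfl
  smul_mem' := by
    intro c a ha π x
    simp [ha π x]

/-- The state `|ψ_π⟩ = (I ⊗ V(π))|Φ⟩` on `(ℂ^{d^n})^{⊗t} ⊗ (ℂ^{d^n})^{⊗t}`, where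
`|Φ⟩ = d^{−tn/2}∑_k |k,k⟩` is the maximally entangled state and `V(π)` permutes the
`t` tensor factors.  Componentwise, `ψ_π(x,y) = d^{−tn/2}` if `y = x ∘ π⁻¹`, else `0`. -/
noncomputable def psiPerm (d n t : ℕ) (π : Equiv.Perm (Fin t)) :
    (Fin t → Fin (d ^ n)) × (Fin t → Fin (d ^ n)) → ℂ :=
  fun p => if p.2 = p.1 ∘ ⇑(π⁻¹) then ((Real.sqrt ((d : ℝ) ^ (t * n)) : ℝ) : ℂ)⁻¹ else 0

open MulAction

attribute [local instance] arrowAction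

variable {m t : ℕ}

/-- map a tuple to its multiset of values -/
noncomputable def tupleSym (m t : ℕ) (x : Fin t → Fin m) : Sym (Fin m) t :=
  ⟨(List.ofFn x : Multiset (Fin m)), by simp⟩

lemma tupleSym_comp_perm (x : Fin t → Fin m) (π : Equiv.Perm (Fin t)) :
    tupleSym m t (x ∘ ⇑π) = tupleSym m t x := by
  apply Subtype.ext
  exact Quot.sound (Equiv.Perm.ofFn_comp_perm π x)

lemma tupleSym_eq_iff (x y : Fin t → Fin m) :
    tupleSym m t x = tupleSym m t y ↔ ∃ π : Equiv.Perm (Fin t), x ∘ ⇑π = y := by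
  constructor
  · intro h
    have hml : (List.ofFn x : Multiset (Fin m)) = (List.ofFn y : Multiset (Fin m)) :=
      congrArg Subtype.val h
    have hperm : List.Perm (List.ofFn x) (List.ofFn y) := Quotient.exact hml
    -- sorted versions are equal
    have h1 : List.Perm (List.ofFn (x ∘ ⇑(Tuple.sort x))) (List.ofFn (y ∘ ⇑(Tuple.sort y))) := by
      exact ((Equiv.Perm.ofFn_comp_perm (Tuple.sort x) x).trans hperm).trans
        (Equiv.Perm.ofFn_comp_perm (Tuple.sort y) y).symm
    have h2 : List.ofFn (x ∘ ⇑(Tuple.sort x)) = List.ofFn (y ∘ ⇑(Tuple.sort y)) :=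
      List.Perm.eq_of_sortedLE (Tuple.monotone_sort x).sortedLE_ofFn
        (Tuple.monotone_sort y).sortedLE_ofFn h1
    have h3 : x ∘ ⇑(Tuple.sort x) = y ∘ ⇑(Tuple.sort y) := List.ofFn_injective h2
    refine ⟨Tuple.sort x * (Tuple.sort y)⁻¹, ?_⟩
    funext i
    have := congrFun h3 ((Tuple.sort y)⁻¹ i)
    simpa using this
  · rintro ⟨π, rfl⟩
    exact (tupleSym_comp_perm x π).symm

lemma tupleSym_surjective : Function.Surjective (tupleSym m t) := by
  rintro ⟨s, hs⟩
  induction s using Quotient.inductionOn with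
  | h l =>
    have hl : l.length = t := by simpa using hs
    refine ⟨fun i => l.get (Fin.cast hl.symm i), ?_⟩
    apply Subtype.ext
    show ((List.ofFn _ : List (Fin m)) : Multiset (Fin m)) = _
    congr 1
    apply List.ext_get (by simp [hl])
    intro i h1 h2
    simp [List.get_ofFn]

lemma card_orbitQuot
    [Fintype (Quotient (orbitRel (Equiv.Perm (Fin t)) (Fin t → Fin m)))] :
    Fintype.card (Quotient (orbitRel (Equiv.Perm (Fin t)) (Fin t → Fin m)))
      = Nat.multichoose m t := by
  classical
  have e : Quotient (orbitRel (Equiv.Perm (Fin t)) (Fin t → Fin m)) ≃ Sym (Fin m) t := by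
    refine Equiv.ofBijective (Quotient.lift (tupleSym m t) ?_) ⟨?_, ?_⟩
    · rintro x y ⟨g, rfl⟩
      show tupleSym m t (y ∘ ⇑g⁻¹) = tupleSym m t y
      exact tupleSym_comp_perm y g⁻¹
    · rintro ⟨x⟩ ⟨y⟩ h
      have h' : tupleSym m t x = tupleSym m t y := h
      obtain ⟨π, hπ⟩ := (tupleSym_eq_iff x y).mp h'
      refine Quotient.sound ⟨π, ?_⟩
      show y ∘ ⇑π⁻¹ = x
      funext i
      have := congrFun hπ (π⁻¹ i)
      simpa using this.symm
    · intro s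
      obtain ⟨x, hx⟩ := tupleSym_surjective s
      exact ⟨⟦x⟧, hx⟩
  rw [Fintype.card_congr e, Sym.card_sym_eq_multichoose, Fintype.card_fin]

lemma cond_iff (σ π : Equiv.Perm (Fin t)) (x : Fin t → Fin m) :
    x ∘ ⇑σ⁻¹ = x ∘ ⇑π⁻¹ ↔ x ∈ fixedBy (Fin t → Fin m) (π⁻¹ * σ) := by
  constructor
  · intro h
    show (π⁻¹ * σ) • x = x
    funext i
    have := congrFun h (π i)
    show x ((π⁻¹ * σ)⁻¹ i) = x i
    simpa using this
  · intro h
    have h' : (π⁻¹ * σ) • x = x := h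
    funext j
    have h2 : x ((π⁻¹ * σ)⁻¹ (π⁻¹ j)) = x (π⁻¹ j) := congrFun h' (π⁻¹ j)
    show x (σ⁻¹ j) = x (π⁻¹ j)
    simpa using h2

lemma sum_card_cond (σ : Equiv.Perm (Fin t))
    [Fintype (Quotient (orbitRel (Equiv.Perm (Fin t)) (Fin t → Fin m)))] :
    (∑ π : Equiv.Perm (Fin t),
        Fintype.card {x : Fin t → Fin m // x ∘ ⇑σ⁻¹ = x ∘ ⇑π⁻¹})
      = Nat.multichoose m t * Nat.factorial t := by
  classical
  have h1 : ∀ π : Equiv.Perm (Fin t),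
      Fintype.card {x : Fin t → Fin m // x ∘ ⇑σ⁻¹ = x ∘ ⇑π⁻¹}
        = Fintype.card (fixedBy (Fin t → Fin m) (π⁻¹ * σ)) := by
    intro π
    exact Fintype.card_congr (Equiv.subtypeEquivRight (cond_iff σ π))
  simp_rw [h1]
  set e : Equiv.Perm (Fin t) ≃ Equiv.Perm (Fin t) :=
    (Equiv.inv (Equiv.Perm (Fin t))).trans (Equiv.mulRight σ) with he
  have h2 := Fintype.sum_bijective e e.bijective
    (fun π => Fintype.card (fixedBy (Fin t → Fin m) (π⁻¹ * σ)))
    (fun τ => Fintype.card (fixedBy (Fin t → Fin m) τ)) (fun π => by simp [he])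
  rw [h2, MulAction.sum_card_fixedBy_eq_card_orbits_mul_card_group, card_orbitQuot,
    Fintype.card_perm, Fintype.card_fin]

noncomputable def symEquiv (m t : ℕ) :
    symSubspace m t ≃ₗ[ℂ]
      (Quotient (orbitRel (Equiv.Perm (Fin t)) (Fin t → Fin m)) → ℂ) where
  toFun v := Quotient.lift (v : (Fin t → Fin m) → ℂ) (by
    rintro x y ⟨g, rfl⟩
    show (v : (Fin t → Fin m) → ℂ) (y ∘ ⇑g⁻¹) = (v : (Fin t → Fin m) → ℂ) y
    exact v.2 g⁻¹ y)
  map_add' u v := by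
    funext q
    induction q using Quotient.ind
    rfl
  map_smul' c v := by
    funext q
    induction q using Quotient.ind
    rfl
  invFun w := ⟨fun x => w (Quotient.mk (orbitRel (Equiv.Perm (Fin t)) (Fin t → Fin m)) x),
    by
      intro π x
      refine congrArg w (Quotient.sound ⟨π⁻¹, ?_⟩)
      show x ∘ ⇑π⁻¹⁻¹ = x ∘ ⇑π
      rw [inv_inv]⟩
  left_inv v := by
    apply Subtype.ext
    funext x
    rfl
  right_inv w := by
    funext q
    induction q using Quotient.ind
    rfl

lemma finrank_symSubspace (m t : ℕ)
    [Fintype (Quotient (orbitRel (Equiv.Perm (Fin t)) (Fin t → Fin m)))] :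
    Module.finrank ℂ (symSubspace m t)
      = Fintype.card (Quotient (orbitRel (Equiv.Perm (Fin t)) (Fin t → Fin m))) := by
  rw [(symEquiv m t).finrank_eq, Module.finrank_fintype_fun_eq_card]

lemma asc_bound (m : ℕ) : ∀ t : ℕ, t ^ 2 ≤ m →
    (Nat.ascFactorial m t : ℝ) ≤ (m : ℝ) ^ t * (1 + (t : ℝ) ^ 2 / m) := by
  intro t
  induction t with
  | zero => simp
  | succ t ih =>
    intro h
    have ht : t ^ 2 ≤ m := le_trans (Nat.pow_le_pow_left (Nat.le_succ t) 2) h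
    have hm1 : 1 ≤ m := le_trans (Nat.one_le_pow 2 (t+1) t.succ_pos) h
    have hM : (1 : ℝ) ≤ (m : ℝ) := by exact_mod_cast hm1
    have hM0 : (0 : ℝ) < (m : ℝ) := by linarith
    have hP : (0 : ℝ) < (m : ℝ) ^ t := by positivity
    have hT : (0 : ℝ) ≤ (t : ℝ) := by positivity
    have hcast : ((t : ℝ) + 1) ^ 2 ≤ (m : ℝ) := by
      have : ((t + 1 : ℕ) : ℝ) ^ 2 ≤ (m : ℝ) := by exact_mod_cast h
      push_cast at this; linarith
    have key : ((m : ℝ) + t) * ((m : ℝ) + (t : ℝ) ^ 2)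
        ≤ (m : ℝ) * ((m : ℝ) + ((t : ℝ) + 1) ^ 2) := by
      nlinarith [mul_le_mul_of_nonneg_left hcast (by linarith : (0:ℝ) ≤ (t : ℝ) + 1)]
    have step : (Nat.ascFactorial m (t + 1) : ℝ)
        = ((m : ℝ) + t) * (Nat.ascFactorial m t : ℝ) := by
      rw [Nat.ascFactorial_succ]; push_cast; ring
    have ih' := ih ht
    have h2 : (Nat.ascFactorial m (t+1) : ℝ)
        ≤ ((m : ℝ) + t) * ((m : ℝ) ^ t * (1 + (t : ℝ) ^ 2 / m)) := by
      rw [step]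
      exact mul_le_mul_of_nonneg_left ih' (by linarith)
    refine h2.trans ?_
    have goal2 : ((m : ℝ) + t) * ((m : ℝ) ^ t * (1 + (t : ℝ) ^ 2 / m))
        ≤ (m : ℝ) ^ (t + 1) * (1 + ((t : ℝ) + 1) ^ 2 / m) := by
      rw [pow_succ ((m : ℝ)) t]
      have e1 : 1 + (t : ℝ) ^ 2 / m = ((m : ℝ) + (t : ℝ) ^ 2) / m := by field_simp
      have e2 : 1 + ((t : ℝ) + 1) ^ 2 / m = ((m : ℝ) + ((t : ℝ) + 1) ^ 2) / m := by field_simp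
      rw [e1, e2,
        show ((m:ℝ)+t) * ((m:ℝ)^t * (((m:ℝ)+(t:ℝ)^2)/m))
          = ((m:ℝ)^t * (((m:ℝ)+t)*((m:ℝ)+(t:ℝ)^2)))/m by ring,
        show (m:ℝ)^t * m * (((m:ℝ)+((t:ℝ)+1)^2)/m)
          = ((m:ℝ)^t * ((m:ℝ)*((m:ℝ)+((t:ℝ)+1)^2)))/m by ring]
      gcongr
    have : (1 + ((t : ℝ) + 1) ^ 2 / m) = (1 + (((t+1 : ℕ) : ℝ)) ^ 2 / m) := by push_cast; ring
    rw [this] at goal2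
    exact goal2

lemma inner_psi (d n t : ℕ) (σ π : Equiv.Perm (Fin t)) :
    (∑ p, (starRingEnd ℂ) (psiPerm d n t σ p) * psiPerm d n t π p)
      = (((Fintype.card {x : Fin t → Fin (d ^ n) // x ∘ ⇑σ⁻¹ = x ∘ ⇑π⁻¹} : ℝ)
          / (d : ℝ) ^ (t * n) : ℝ) : ℂ) := by
  classical
  set c : ℂ := ((Real.sqrt ((d : ℝ) ^ (t * n)) : ℝ) : ℂ)⁻¹ with hc
  have hcc : (starRingEnd ℂ) c * c = (((((d : ℝ) ^ (t * n))⁻¹ : ℝ)) : ℂ) := by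
    rw [hc, map_inv₀, Complex.conj_ofReal, ← Complex.ofReal_inv, ← Complex.ofReal_mul,
      ← mul_inv, Real.mul_self_sqrt (by positivity)]
  rw [Fintype.sum_prod_type]
  have hterm : ∀ x : Fin t → Fin (d ^ n),
      (∑ y : Fin t → Fin (d ^ n),
        (starRingEnd ℂ) (psiPerm d n t σ (x, y)) * psiPerm d n t π (x, y))
      = if x ∘ ⇑σ⁻¹ = x ∘ ⇑π⁻¹ then (((((d : ℝ) ^ (t * n))⁻¹ : ℝ)) : ℂ) else 0 := by
    intro x
    unfold psiPerm
    simp only [← hc, apply_ite (starRingEnd ℂ), map_zero, ite_mul, zero_mul, mul_ite, mul_zero]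
    rw [Finset.sum_ite_eq' Finset.univ (x ∘ ⇑π⁻¹)
      (fun y => if y = x ∘ ⇑σ⁻¹ then (starRingEnd ℂ) c * c else 0)]
    simp only [Finset.mem_univ, if_true, hcc, eq_comm]
  simp_rw [hterm]
  rw [Finset.sum_ite, Finset.sum_const, Finset.sum_const_zero, add_zero]
  rw [Fintype.card_subtype]
  push_cast
  rw [div_eq_mul_inv]
  simp [mul_comm]

/-- For every `σ ∈ S_t`: `∑_{π∈S_t} |⟨ψ_σ|ψ_π⟩| = t!·dim(∨^t ℂ^{d^n})/d^{tn}`, and if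
`t² ≤ d^n` this sum is at most `1 + t²/d^n`. -/
theorem psi_overlap_sum (d n t : ℕ) (σ : Equiv.Perm (Fin t)) :
    (∑ π : Equiv.Perm (Fin t),
        ‖∑ p, (starRingEnd ℂ) (psiPerm d n t σ p) * psiPerm d n t π p‖)
      = (t.factorial : ℝ) * (Module.finrank ℂ (symSubspace (d ^ n) t) : ℝ) / (d : ℝ) ^ (t * n)
    ∧ (t ^ 2 ≤ d ^ n →
        (∑ π : Equiv.Perm (Fin t),
            ‖∑ p, (starRingEnd ℂ) (psiPerm d n t σ p) * psiPerm d n t π p‖)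
          ≤ 1 + (t : ℝ) ^ 2 / (d : ℝ) ^ n) := by
  classical
  haveI : Fintype (Quotient (orbitRel (Equiv.Perm (Fin t)) (Fin t → Fin (d ^ n)))) :=
    Quotient.fintype _
  have habs : ∀ π : Equiv.Perm (Fin t),
      ‖∑ p, (starRingEnd ℂ) (psiPerm d n t σ p) * psiPerm d n t π p‖
        = (Fintype.card {x : Fin t → Fin (d ^ n) // x ∘ ⇑σ⁻¹ = x ∘ ⇑π⁻¹} : ℝ)
            / (d : ℝ) ^ (t * n) := by
    intro π
    rw [inner_psi, Complex.norm_real, Real.norm_eq_abs, abs_of_nonneg (by positivity)]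
  have hsum : (∑ π : Equiv.Perm (Fin t),
      ‖∑ p, (starRingEnd ℂ) (psiPerm d n t σ p) * psiPerm d n t π p‖)
      = ((Nat.multichoose (d ^ n) t * Nat.factorial t : ℕ) : ℝ) / (d : ℝ) ^ (t * n) := by
    simp_rw [habs]
    rw [← Finset.sum_div, ← sum_card_cond σ]
    push_cast
    ring
  constructor
  · rw [hsum, finrank_symSubspace, card_orbitQuot]
    push_cast
    ring
  · intro hineq
    rw [hsum]
    have hmt : Nat.multichoose (d ^ n) t * Nat.factorial t = Nat.ascFactorial (d ^ n) t := by
      rw [Nat.multichoose_eq, Nat.ascFactorial_eq_factorial_mul_choose', mul_comm]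
    rw [hmt]
    have hdn : (d : ℝ) ^ (t * n) = ((d ^ n : ℕ) : ℝ) ^ t := by
      push_cast
      rw [← pow_mul, mul_comm]
    have hdn2 : (d : ℝ) ^ n = ((d ^ n : ℕ) : ℝ) := by push_cast; rfl
    rw [hdn, hdn2]
    have hpos : (0 : ℝ) < ((d ^ n : ℕ) : ℝ) ^ t := by
      rcases Nat.eq_zero_or_pos t with rfl | htpos
      · simp
      · have h1 : 1 ≤ d ^ n := le_trans (Nat.one_le_pow 2 t htpos) hineq
        have : (1 : ℝ) ≤ ((d ^ n : ℕ) : ℝ) := by exact_mod_cast h1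
        positivity
    rw [div_le_iff₀ hpos]
    have := asc_bound (d ^ n) t hineq
    linarith [this]
end

section
/- For any matrices A and B on ℂ^N with A Hermitian, ‖I + iεA − (ε²/2)B‖₁ = tr(I) + (ε²/2)(tr(A²) − tr(B)) + O(ε³) as ε → 0. -/
open Matrix

/-- The trace norm (sum of singular values) of a square complex matrix. -/
noncomputable def traceNorm {ι : Type*} [Fintype ι] [DecidableEq ι] (A : Matrix ι ι ℂ) : ℝ :=
  ∑ i, Real.sqrt ((Matrix.isHermitian_conjTranspose_mul_self A).eigenvalues i)

theorem trace_eq_sum_eig {n : Type*} [Fintype n] [DecidableEq n] (H : Matrix n n ℂ)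
    (hH : H.IsHermitian) : H.trace = ∑ i, (hH.eigenvalues i : ℂ) := by
  conv_lhs => rw [hH.spectral_theorem, Unitary.conjStarAlgAut_apply]
  rw [trace_mul_comm, ← mul_assoc, (Matrix.mem_unitaryGroup_iff').mp (hH.eigenvectorUnitary).2,
    one_mul, trace_diagonal]
  rfl

theorem trace_sq_eq_sum_eig {n : Type*} [Fintype n] [DecidableEq n] (H : Matrix n n ℂ)
    (hH : H.IsHermitian) : (H * H).trace = ∑ i, ((hH.eigenvalues i : ℂ)) ^ 2 := by
  set U : Matrix n n ℂ := (hH.eigenvectorUnitary : Matrix n n ℂ)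
  set D : Matrix n n ℂ := diagonal (RCLike.ofReal ∘ hH.eigenvalues)
  have hU : star U * U = 1 := (Matrix.mem_unitaryGroup_iff').mp (hH.eigenvectorUnitary).2
  conv_lhs => rw [hH.spectral_theorem, Unitary.conjStarAlgAut_apply]
  have h1 : U * D * star U * (U * D * star U) = U * (D * D) * star U := by
    calc U * D * star U * (U * D * star U) = U * D * (star U * U) * (D * star U) := by noncomm_ring
    _ = U * (D * D) * star U := by rw [hU, mul_one]; noncomm_ring
  rw [h1, trace_mul_comm, ← mul_assoc, hU, one_mul]
  simp [D, diagonal_mul_diagonal, trace_diagonal, pow_two]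

theorem sqrt_taylor_bound (μ : ℝ) (hμ : 0 ≤ μ) :
    |Real.sqrt μ - (1 + (μ - 1)/2)| ≤ (μ - 1)^2/2 := by
  have hs : 0 ≤ Real.sqrt μ := Real.sqrt_nonneg μ
  have h2 : Real.sqrt μ ^ 2 = μ := Real.sq_sqrt hμ
  rw [abs_le]
  constructor <;> nlinarith [sq_nonneg (Real.sqrt μ - 1), sq_nonneg (Real.sqrt μ + 1),
    sq_nonneg ((Real.sqrt μ - 1) * (Real.sqrt μ + 1)), sq_nonneg (Real.sqrt μ^2 - 1)]

theorem expand_lemma {n : Type*} [Fintype n] [DecidableEq n]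
    (A' B' : Matrix n n ℂ) (hA' : A'ᴴ = -A') (x : ℂ) (hx : star x = x) :
    (1 + x•A' + x^2•B')ᴴ * (1 + x•A' + x^2•B') =
      1 + x^2 • (B' + B'ᴴ - A'*A') + x^3 • (B'ᴴ*A' - A'*B') + x^4 • (B'ᴴ*B') := by
  simp only [conjTranspose_add, conjTranspose_smul, conjTranspose_one, hx, star_pow, hA']
  simp only [mul_add, add_mul, one_mul, mul_one, smul_mul_assoc, mul_smul_comm, smul_smul,
    neg_mul, mul_neg, smul_neg, neg_smul]
  module

/-- For matrices `A, B` on `ℂ^N` with `A` Hermitian,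
`‖I + iεA − (ε²/2)B‖₁ = tr(I) + (ε²/2)(tr(A²) − Re tr(B)) + O(ε³)` as `ε → 0`. -/
theorem traceNorm_expansion {N : ℕ} (A B : Matrix (Fin N) (Fin N) ℂ)
    (hA : A.IsHermitian) :
    Asymptotics.IsBigO (nhds (0 : ℝ))
      (fun ε : ℝ =>
        traceNorm ((1 : Matrix (Fin N) (Fin N) ℂ) + ((Complex.I * ε) • A)
            - (((ε ^ 2 / 2 : ℝ) : ℂ) • B))
          - ((N : ℝ) + ε ^ 2 / 2 * ((Matrix.trace (A * A)).re - (Matrix.trace B).re)))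
      (fun ε : ℝ => ε ^ 3) := by
  classical
  set A' : Matrix (Fin N) (Fin N) ℂ := Complex.I • A with hA'def
  set B' : Matrix (Fin N) (Fin N) ℂ := (-(1/2) : ℂ) • B with hB'def
  have hA'h : A'ᴴ = -A' := by
    rw [hA'def, conjTranspose_smul, hA.eq]
    simp [Complex.star_def, Complex.conj_I, neg_smul]
  set C2 : Matrix (Fin N) (Fin N) ℂ := B' + B'ᴴ - A'*A' with hC2
  set C3 : Matrix (Fin N) (Fin N) ℂ := B'ᴴ*A' - A'*B' with hC3
  set C4 : Matrix (Fin N) (Fin N) ℂ := B'ᴴ*B' with hC4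
  set t2 : ℝ := (C2.trace).re with ht2def
  set t3 : ℝ := (C3.trace).re with ht3def
  set t4 : ℝ := (C4.trace).re with ht4def
  set u22 : ℝ := ((C2*C2).trace).re
  set u23 : ℝ := ((C2*C3).trace).re
  set u24 : ℝ := ((C2*C4).trace).re
  set u32 : ℝ := ((C3*C2).trace).re
  set u33 : ℝ := ((C3*C3).trace).re
  set u34 : ℝ := ((C3*C4).trace).re
  set u42 : ℝ := ((C4*C2).trace).re
  set u43 : ℝ := ((C4*C3).trace).re
  set u44 : ℝ := ((C4*C4).trace).re
  set g : ℝ → ℝ := fun ε => ε^4*u22 + ε^5*(u23+u32) + ε^6*(u24+u33+u42)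
      + ε^7*(u34+u43) + ε^8*u44 with hgdef
  set q : ℝ → ℝ := fun ε => (ε^3*t3 + ε^4*t4)/2 with hqdef
  -- t2 is the claimed coefficient
  have ht2 : t2 = (Matrix.trace (A * A)).re - (Matrix.trace B).re := by
    have hAA : A'*A' = (-1 : ℂ) • (A*A) := by
      rw [hA'def, smul_mul_assoc, mul_smul_comm, smul_smul, Complex.I_mul_I]
    rw [ht2def, hC2, hB'def, hAA]
    rw [trace_sub, trace_add, trace_conjTranspose, trace_smul, trace_smul]
    simp [Complex.add_re, Complex.sub_re, Complex.conj_re, smul_eq_mul]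
    ring
  -- rewrite M ε
  have hM : ∀ ε : ℝ, (1 : Matrix (Fin N) (Fin N) ℂ) + ((Complex.I * ε) • A)
      - (((ε ^ 2 / 2 : ℝ) : ℂ) • B) = 1 + (ε:ℂ)•A' + (ε:ℂ)^2•B' := by
    intro ε
    have hc : (((ε^2/2 : ℝ)) : ℂ) = (ε:ℂ)^2 * (1/2) := by push_cast; ring
    rw [hc, hA'def, hB'def]
    module
  have hH : ∀ ε : ℝ, ((1 : Matrix (Fin N) (Fin N) ℂ) + ((Complex.I * ε) • A)
      - (((ε ^ 2 / 2 : ℝ) : ℂ) • B))ᴴ * ((1 : Matrix (Fin N) (Fin N) ℂ) + ((Complex.I * ε) • A)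
      - (((ε ^ 2 / 2 : ℝ) : ℂ) • B)) = 1 + (ε:ℂ)^2 • C2 + (ε:ℂ)^3 • C3 + (ε:ℂ)^4 • C4 := by
    intro ε
    rw [hM ε]
    exact expand_lemma A' B' hA'h (ε:ℂ) (by simp [Complex.star_def, Complex.conj_ofReal])
  -- key pointwise estimate
  have key : ∀ ε : ℝ,
      |traceNorm ((1 : Matrix (Fin N) (Fin N) ℂ) + ((Complex.I * ε) • A)
          - (((ε ^ 2 / 2 : ℝ) : ℂ) • B))
        - ((N : ℝ) + ε ^ 2 / 2 * t2) - q ε| ≤ g ε / 2 ∧ 0 ≤ g ε := by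
    intro ε
    set Mm : Matrix (Fin N) (Fin N) ℂ := (1 : Matrix (Fin N) (Fin N) ℂ)
        + ((Complex.I * ε) • A) - (((ε ^ 2 / 2 : ℝ) : ℂ) • B) with hMm
    have hHer : (Mmᴴ * Mm).IsHermitian := isHermitian_conjTranspose_mul_self Mm
    set μ : Fin N → ℝ := hHer.eigenvalues with hμ
    have hnn : ∀ i, 0 ≤ μ i := fun i =>
      Matrix.eigenvalues_conjTranspose_mul_self_nonneg Mm i
    have hsum : ∑ i, μ i = (Mmᴴ * Mm).trace.re := by
      rw [trace_eq_sum_eig _ hHer]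
      simp
      rfl
    have hsum2 : ∑ i, (μ i)^2 = ((Mmᴴ * Mm) * (Mmᴴ * Mm)).trace.re := by
      rw [trace_sq_eq_sum_eig _ hHer]
      simp [← Complex.ofReal_pow]
      rfl
    have htr1 : (Mmᴴ * Mm).trace.re = N + (ε^2*t2 + ε^3*t3 + ε^4*t4) := by
      rw [hMm, hH ε]
      rw [trace_add, trace_add, trace_add, trace_one, trace_smul, trace_smul, trace_smul]
      simp only [smul_eq_mul, Complex.add_re, ← Complex.ofReal_pow, Complex.re_ofReal_mul]
      simp [ht2def, ht3def, ht4def]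
      ring
    have htr2 : ((Mmᴴ * Mm) * (Mmᴴ * Mm)).trace.re
        = N + 2*(ε^2*t2 + ε^3*t3 + ε^4*t4) + g ε := by
      rw [hMm, hH ε]
      simp only [mul_add, add_mul, one_mul, mul_one, smul_mul_assoc, mul_smul_comm, smul_smul]
      simp only [trace_add, trace_smul, trace_one, smul_eq_mul]
      have hre : ∀ (k : ℕ) (z : ℂ), ((ε:ℂ)^k * z).re = ε^k * z.re := by
        intro k z
        rw [← Complex.ofReal_pow, Complex.re_ofReal_mul]
      have hre2 : ∀ (k l : ℕ) (z : ℂ), ((ε:ℂ)^k * (ε:ℂ)^l * z).re = ε^(k+l) * z.re := by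
        intro k l z
        rw [← pow_add, ← Complex.ofReal_pow, Complex.re_ofReal_mul]
      simp only [Complex.add_re, hre2, hre, Complex.one_re, Complex.natCast_re,
        Fintype.card_fin, trace_one]
      simp only [hgdef]
      ring
    have htn : traceNorm Mm = ∑ i, Real.sqrt (μ i) := rfl
    have hgε : g ε = ∑ i, (μ i - 1)^2 := by
      have : ∑ i, (μ i - 1)^2 = ∑ i, (μ i)^2 - 2*∑ i, μ i + N := by
        rw [Finset.sum_congr rfl (fun i _ => by ring :
          ∀ i ∈ Finset.univ, (μ i - 1)^2 = (μ i)^2 - 2*(μ i) + 1)]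
        rw [Finset.sum_add_distrib, Finset.sum_sub_distrib, Finset.sum_const,
          Finset.mul_sum]
        simp
      rw [this, hsum, hsum2, htr1, htr2]
      ring
    constructor
    · have hb : |∑ i, Real.sqrt (μ i) - ∑ i, (1 + (μ i - 1)/2)| ≤ ∑ i, (μ i - 1)^2/2 := by
        rw [← Finset.sum_sub_distrib]
        refine (Finset.abs_sum_le_sum_abs _ _).trans ?_
        exact Finset.sum_le_sum fun i _ => sqrt_taylor_bound _ (hnn i)
      have hdiv : ∑ i, ((μ i - 1)/2) = ((∑ i, μ i) - N)/2 := by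
        rw [← Finset.sum_div, Finset.sum_sub_distrib, Finset.sum_const, Finset.card_univ,
          Fintype.card_fin]
        simp
      have hmid : ∑ i, (1 + (μ i - 1)/2) = (N:ℝ) + ((∑ i, μ i) - N)/2 := by
        rw [Finset.sum_add_distrib, hdiv, Finset.sum_const, Finset.card_univ, Fintype.card_fin]
        simp
      have heq : traceNorm Mm - ((N:ℝ) + ε^2/2*t2) - q ε
          = ∑ i, Real.sqrt (μ i) - ∑ i, (1 + (μ i - 1)/2) := by
        rw [htn, hmid, hsum, htr1, hqdef]
        ring
      rw [heq]
      refine hb.trans (le_of_eq ?_)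
      rw [hgε, Finset.sum_div]
    · rw [hgε]
      exact Finset.sum_nonneg fun i _ => sq_nonneg _
  -- assemble the big-O statement
  have hsplit : (fun ε : ℝ =>
      traceNorm ((1 : Matrix (Fin N) (Fin N) ℂ) + ((Complex.I * ε) • A)
          - (((ε ^ 2 / 2 : ℝ) : ℂ) • B))
        - ((N : ℝ) + ε ^ 2 / 2 * ((Matrix.trace (A * A)).re - (Matrix.trace B).re)))
      = fun ε : ℝ =>
        (traceNorm ((1 : Matrix (Fin N) (Fin N) ℂ) + ((Complex.I * ε) • A)
          - (((ε ^ 2 / 2 : ℝ) : ℂ) • B)) - ((N : ℝ) + ε ^ 2 / 2 * t2) - q ε) + q ε := by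
    funext ε
    rw [ht2]
    ring
  rw [hsplit]
  have cube : ∀ (v : ℝ → ℝ), Continuous v →
      (fun ε : ℝ => ε^3 * v ε) =O[nhds 0] (fun ε : ℝ => ε^3) := by
    intro v hv
    have h := (Asymptotics.isBigO_refl (fun ε : ℝ => ε^3) (nhds 0)).mul
      ((hv.tendsto 0).isBigO_one ℝ)
    simpa using h
  apply Asymptotics.IsBigO.add
  · have hg : g =O[nhds 0] (fun ε : ℝ => ε^3) := by
      have heq : g = fun ε : ℝ => ε^3 *
          (ε*u22 + ε^2*(u23+u32) + ε^3*(u24+u33+u42) + ε^4*(u34+u43) + ε^5*u44) := by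
        funext ε
        simp only [hgdef]
        ring
      rw [heq]
      apply cube
      fun_prop
    refine (Asymptotics.isBigO_of_le (nhds 0) fun ε => ?_).trans hg
    rw [Real.norm_eq_abs, Real.norm_eq_abs, abs_of_nonneg (key ε).2]
    refine le_trans (key ε).1 (half_le_self (key ε).2)
  · have heq : q = fun ε : ℝ => ε^3 * ((t3 + ε*t4)/2) := by
      funext ε
      simp only [hqdef]
      ring
    rw [heq]
    apply cube
    have hc : Continuous (fun ε : ℝ => (t3 + ε*t4)/2) := by fun_prop
    exact hc
end

section
/- Let ρ_Haar := ∫ (U⊗I)^{⊗t} Φ^{⊗t} ((U⊗I)^{⊗t})† dU, where Φ is the projector onto the maximally entangled state on ℂ^N⊗ℂ^N and the integral is over Haar measure on U(N). Then the support of ρ_Haar is contained in the symmetric subspace ∨^t(ℂ^N⊗ℂ^N), and the minimum eigenvalue of ρ_Haar restricted to its support is at least N^{−2t}. -/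
open Matrix Kronecker MeasureTheory

noncomputable instance matrixMeasurableSpace {ι κ : Type*} : MeasurableSpace (Matrix ι κ ℂ) :=
  (inferInstance : MeasurableSpace (ι → κ → ℂ))

/-- The `t`-fold tensor (Kronecker) power of a matrix with index set `α`. -/
def tpowA {α : Type*} (A : Matrix α α ℂ) (t : ℕ) :
    Matrix (Fin t → α) (Fin t → α) ℂ :=
  Matrix.of fun x y => ∏ i, A (x i) (y i)

/-- The projector `Φ` onto the maximally entangled state `|Φ_N⟩ = N^{−1/2}∑_i |i,i⟩`
on `ℂ^N ⊗ ℂ^N`. -/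
noncomputable def maxEnt (N : ℕ) : Matrix (Fin N × Fin N) (Fin N × Fin N) ℂ :=
  Matrix.of fun p q => if p.1 = p.2 ∧ q.1 = q.2 then ((N : ℂ))⁻¹ else 0

/-- `ρ_Haar = ∫ (U⊗I)^{⊗t} Φ^{⊗t} ((U⊗I)^{⊗t})† dμ(U)`, defined entrywise. -/
noncomputable def rhoHaar (N t : ℕ)
    (μ : Measure (Matrix.unitaryGroup (Fin N) ℂ)) :
    Matrix (Fin t → Fin N × Fin N) (Fin t → Fin N × Fin N) ℂ :=
  Matrix.of fun x y =>
    ∫ U, ((tpowA ((U : Matrix (Fin N) (Fin N) ℂ) ⊗ₖ (1 : Matrix (Fin N) (Fin N) ℂ)) t)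
        * tpowA (maxEnt N) t
        * (tpowA ((U : Matrix (Fin N) (Fin N) ℂ) ⊗ₖ (1 : Matrix (Fin N) (Fin N) ℂ)) t)ᴴ) x y ∂μ

/-- The symmetric subspace `∨^t (ℂ^N ⊗ ℂ^N)`, realized as functions on the product basis. -/
noncomputable def symSubspaceA (α : Type*) (t : ℕ) : Submodule ℂ ((Fin t → α) → ℂ) where
  carrier := {v | ∀ (π : Equiv.Perm (Fin t)) (x : Fin t → α), v (x ∘ π) = v x}
  add_mem' := by
    intro a b ha hb π x
    simp [ha π x, hb π x]
  zero_mem' := by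
    intro π x
    rfl
  smul_mem' := by
    intro c a ha π x
    simp [ha π x]

namespace RhoAux

variable {N t : ℕ}

abbrev UG (N : ℕ) := Matrix.unitaryGroup (Fin N) ℂ

/-- matrix entry of a unitary -/
noncomputable def ent (U : UG N) (a b : Fin N) : ℂ := (U : Matrix (Fin N) (Fin N) ℂ) a b

/-- entrywise product function for a general matrix -/
noncomputable def psiM (U : Matrix (Fin N) (Fin N) ℂ) (x : Fin t → Fin N × Fin N) : ℂ :=
  ∏ i, U (x i).1 (x i).2

noncomputable def psi (U : UG N) (x : Fin t → Fin N × Fin N) : ℂ :=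
  ∏ i, ent U (x i).1 (x i).2

lemma psi_eq_psiM (U : UG N) (x : Fin t → Fin N × Fin N) :
    psi U x = psiM (U : Matrix (Fin N) (Fin N) ℂ) x := rfl

/-- pairing of index functions -/
def pr (a c : Fin t → Fin N) : Fin t → Fin N × Fin N := fun i => (a i, c i)

noncomputable def trc (U : UG N) : ℂ := ∑ j, ent U j j

/-- diagonal indicator -/
noncomputable def dd (p : Fin t → Fin N × Fin N) : ℂ :=
  ∏ i, (if (p i).1 = (p i).2 then (1:ℂ) else 0)

lemma star_dd (p : Fin t → Fin N × Fin N) : star (dd p) = dd p := by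
  rw [dd, star_prod]
  refine Finset.prod_congr rfl fun i _ => ?_
  split_ifs <;> simp

section Pointwise

lemma maxEnt_apply (p q : Fin N × Fin N) :
    maxEnt N p q
      = (N:ℂ)⁻¹ * ((if p.1 = p.2 then (1:ℂ) else 0) * (if q.1 = q.2 then (1:ℂ) else 0)) := by
  by_cases h1 : p.1 = p.2 <;> by_cases h2 : q.1 = q.2 <;> simp [maxEnt, h1, h2]

lemma tpow_maxEnt_apply (p q : Fin t → Fin N × Fin N) :
    tpowA (maxEnt N) t p q = ((N:ℂ)⁻¹)^t * (dd p * dd q) := by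
  show (∏ i, maxEnt N (p i) (q i)) = _
  simp only [maxEnt_apply]
  rw [Finset.prod_mul_distrib, Finset.prod_mul_distrib, Finset.prod_const]
  simp [dd, Finset.card_univ, mul_assoc]

lemma sum_A_dd (U : Matrix (Fin N) (Fin N) ℂ) (z : Fin t → Fin N × Fin N) :
    ∑ p : Fin t → Fin N × Fin N, (tpowA (U ⊗ₖ (1 : Matrix (Fin N) (Fin N) ℂ)) t) z p * dd p
      = psiM U z := by
  have h : ∀ p, (tpowA (U ⊗ₖ (1 : Matrix (Fin N) (Fin N) ℂ)) t) z p * dd p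
      = ∏ i, ((U ⊗ₖ (1 : Matrix (Fin N) (Fin N) ℂ)) (z i) (p i)
          * (if (p i).1 = (p i).2 then (1:ℂ) else 0)) := by
    intro p
    rw [Finset.prod_mul_distrib]; rfl
  simp only [h]
  rw [← Fintype.prod_sum (fun i b => (U ⊗ₖ (1 : Matrix (Fin N) (Fin N) ℂ)) (z i) b
    * (if b.1 = b.2 then (1:ℂ) else 0))]
  refine Finset.prod_congr rfl fun i _ => ?_
  rw [Fintype.sum_prod_type]
  simp [Matrix.kroneckerMap_apply, Matrix.one_apply, mul_ite, ite_mul,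
    Finset.sum_ite_eq, Finset.sum_ite_eq']

lemma integrand_eq (U : Matrix (Fin N) (Fin N) ℂ) (x y : Fin t → Fin N × Fin N) :
    ((tpowA (U ⊗ₖ (1 : Matrix (Fin N) (Fin N) ℂ)) t)
        * tpowA (maxEnt N) t
        * (tpowA (U ⊗ₖ (1 : Matrix (Fin N) (Fin N) ℂ)) t)ᴴ) x y
      = ((N:ℂ)^t)⁻¹ * (psiM U x * star (psiM U y)) := by
  set A := tpowA (U ⊗ₖ (1 : Matrix (Fin N) (Fin N) ℂ)) t with hA
  have hstar : ∑ q : Fin t → Fin N × Fin N, dd q * star (A y q) = star (psiM U y) := by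
    rw [← sum_A_dd U y, star_sum]
    refine Finset.sum_congr rfl fun q _ => ?_
    rw [star_mul', star_dd, mul_comm (star (A y q)) (dd q)]
  calc (A * tpowA (maxEnt N) t * Aᴴ) x y
      = ∑ j, ∑ p, (A x p * (((N:ℂ)⁻¹)^t * (dd p * dd j))) * star (A y j) := by
        simp only [Matrix.mul_apply, Matrix.conjTranspose_apply, tpow_maxEnt_apply,
          Finset.sum_mul]
    _ = ∑ p, ∑ j, (A x p * (((N:ℂ)⁻¹)^t * (dd p * dd j))) * star (A y j) := Finset.sum_comm
    _ = ((N:ℂ)⁻¹)^t * ((∑ p, A x p * dd p) * (∑ j, dd j * star (A y j))) := by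
        rw [Finset.sum_mul_sum, Finset.mul_sum]
        refine Finset.sum_congr rfl fun p _ => ?_
        rw [Finset.mul_sum]
        exact Finset.sum_congr rfl fun j _ => by ring
    _ = ((N:ℂ)^t)⁻¹ * (psiM U x * star (psiM U y)) := by
        rw [sum_A_dd, hstar, inv_pow]

lemma ent_mul (U V : UG N) (a b : Fin N) :
    ent (U * V) a b = ∑ k, ent U a k * ent V k b := by
  simp [ent, Matrix.UnitaryGroup.mul_val, Matrix.mul_apply]

lemma ent_inv (U : UG N) (a b : Fin N) : ent U⁻¹ a b = star (ent U b a) := by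
  simp [ent, Matrix.UnitaryGroup.inv_val, Matrix.star_apply]

lemma star_psi (U : UG N) (x : Fin t → Fin N × Fin N) :
    star (psi U x) = ∏ i, star (ent U (x i).1 (x i).2) := by
  rw [psi, star_prod]

lemma psi_inv (U : UG N) (c d : Fin t → Fin N) :
    psi U⁻¹ (pr c d) = star (psi U (pr d c)) := by
  rw [star_psi]
  refine Finset.prod_congr rfl fun i _ => ?_
  exact ent_inv U (c i) (d i)

lemma trc_inv (U : UG N) : trc U⁻¹ = star (trc U) := by
  rw [trc, trc, star_sum]
  exact Finset.sum_congr rfl fun j _ => ent_inv U j j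

/-- `(tr W)^t = ∑_e ∏_i W_{e_i e_i}` -/
lemma trc_pow (U : UG N) : (trc U)^t = ∑ e : Fin t → Fin N, psi U (pr e e) := by
  have h : (trc U)^t = ∏ _i : Fin t, trc U := by
    rw [Finset.prod_const, Finset.card_univ, Fintype.card_fin]
  rw [h, trc]
  rw [Fintype.prod_sum (fun (_i : Fin t) (j : Fin N) => ent U j j)]
  rfl

/-- claim 1: `∑_{ab} conj(U_{ab}) (UV)_{ab} = tr V` -/
lemma sum_star_ent_mul (U V : UG N) :
    ∑ p : Fin N × Fin N, star (ent U p.1 p.2) * ent (U * V) p.1 p.2 = trc V := by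
  rw [Fintype.sum_prod_type]
  have h1 : ∀ b k, ∑ a, star (ent U a b) * ent U a k = (1 : Matrix (Fin N) (Fin N) ℂ) b k := by
    intro b k
    have h := Matrix.UnitaryGroup.star_mul_self U
    have h2 := congrFun (congrFun h b) k
    rw [Matrix.mul_apply] at h2
    simpa [Matrix.star_apply, ent] using h2
  calc ∑ a, ∑ b, star (ent U a b) * ent (U * V) a b
      = ∑ a, ∑ b, ∑ k, star (ent U a b) * ent U a k * ent V k b := by
        refine Finset.sum_congr rfl fun a _ => Finset.sum_congr rfl fun b _ => ?_
        rw [ent_mul, Finset.mul_sum]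
        exact Finset.sum_congr rfl fun k _ => by ring
    _ = ∑ b, ∑ k, (∑ a, star (ent U a b) * ent U a k) * ent V k b := by
        rw [Finset.sum_comm]
        refine Finset.sum_congr rfl fun b _ => ?_
        rw [Finset.sum_comm]
        refine Finset.sum_congr rfl fun k _ => ?_
        rw [Finset.sum_mul]
    _ = ∑ b, ∑ k, (1 : Matrix (Fin N) (Fin N) ℂ) b k * ent V k b := by
        simp_rw [h1]
    _ = trc V := by
        simp [Matrix.one_apply, ite_mul, Finset.sum_ite_eq, trc]

/-- claim 2: decomposition of `psi (U*V)`. -/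
lemma psi_mul (U V : UG N) (a b : Fin t → Fin N) :
    psi (U * V) (pr a b)
      = ∑ c : Fin t → Fin N, psi U (pr a c) * psi V (pr c b) := by
  have h : psi (U * V) (pr a b) = ∏ i, ∑ k, ent U (a i) k * ent V k (b i) := by
    refine Finset.prod_congr rfl fun i _ => ?_
    exact ent_mul U V (a i) (b i)
  rw [h, Fintype.prod_sum (fun i k => ent U (a i) k * ent V k (b i))]
  refine Finset.sum_congr rfl fun c _ => ?_
  rw [show psi U (pr a c) * psi V (pr c b)
      = (∏ i, ent U (a i) (c i)) * ∏ i, ent V (c i) (b i) from rfl,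
    ← Finset.prod_mul_distrib]

/-- claim 4: column orthogonality -/
lemma sum_psi_star_psi (W : UG N) (a b : Fin t → Fin N) :
    ∑ g : Fin t → Fin N, psi W (pr a g) * star (psi W (pr b g))
      = if a = b then (1:ℂ) else 0 := by
  have h : ∀ g : Fin t → Fin N, psi W (pr a g) * star (psi W (pr b g))
      = ∏ i, (ent W (a i) (g i) * star (ent W (b i) (g i))) := by
    intro g
    rw [star_psi]
    rw [show psi W (pr a g) = ∏ i, ent W (a i) (g i) from rfl,
      ← Finset.prod_mul_distrib]
    rfl
  simp only [h]
  rw [← Fintype.prod_sum (fun i k => ent W (a i) k * star (ent W (b i) k))]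
  have hWW : (W : Matrix (Fin N) (Fin N) ℂ) * star (W : Matrix (Fin N) (Fin N) ℂ) = 1 :=
    Matrix.mem_unitaryGroup_iff.mp W.2
  have h2 : ∀ i, ∑ k, ent W (a i) k * star (ent W (b i) k)
      = if a i = b i then (1:ℂ) else 0 := by
    intro i
    have h3 := congrFun (congrFun hWW (a i)) (b i)
    rw [Matrix.mul_apply] at h3
    have : ∀ k, ent W (a i) k * star (ent W (b i) k)
        = (W : Matrix (Fin N) (Fin N) ℂ) (a i) k
          * star (W : Matrix (Fin N) (Fin N) ℂ) k (b i) := by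
      intro k; rw [Matrix.star_apply]; rfl
    simp_rw [this, h3, Matrix.one_apply]
  simp_rw [h2]
  by_cases hab : a = b
  · simp [hab]
  · obtain ⟨i, hi⟩ := Function.ne_iff.mp hab
    rw [if_neg hab]
    exact Finset.prod_eq_zero (Finset.mem_univ i) (by simp [hi])

end Pointwise


section Meas

lemma meas_ent (a b : Fin N) : Measurable (fun U : UG N => ent U a b) := by
  have h1 : Measurable (fun U : UG N => (U : Matrix (Fin N) (Fin N) ℂ)) :=
    measurable_subtype_coe
  exact ((measurable_pi_apply b).comp ((measurable_pi_apply a).comp h1))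

lemma meas_star {f : UG N → ℂ} (hf : Measurable f) : Measurable (fun U => star (f U)) :=
  continuous_star.measurable.comp hf

lemma meas_psi (x : Fin t → Fin N × Fin N) : Measurable (fun U : UG N => psi U x) :=
  Finset.measurable_prod _ (fun _ _ => meas_ent _ _)

lemma meas_trc : Measurable (fun U : UG N => trc U) :=
  Finset.measurable_sum _ (fun _ _ => meas_ent _ _)

lemma sum_normSq_ent (U : UG N) (b : Fin N) :
    ∑ k, Complex.normSq (ent U k b) = 1 := by
  have h := Matrix.UnitaryGroup.star_mul_self U
  have h2 := congrArg (fun M => (M b b).re) h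
  simp only [Matrix.mul_apply, Matrix.star_apply, Matrix.one_apply_eq] at h2
  rw [Complex.one_re] at h2
  rw [← h2, Complex.re_sum]
  refine Finset.sum_congr rfl (fun k _ => ?_)
  have h3 : star ((U : Matrix (Fin N) (Fin N) ℂ) k b) * (U : Matrix (Fin N) (Fin N) ℂ) k b
      = (Complex.normSq (ent U k b) : ℂ) := by
    rw [mul_comm, Complex.star_def, Complex.mul_conj]; rfl
  rw [h3, Complex.ofReal_re]

lemma norm_ent_le_one (U : UG N) (a b : Fin N) : ‖ent U a b‖ ≤ 1 := by
  have h := sum_normSq_ent U b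
  have h1 : Complex.normSq (ent U a b) ≤ 1 := by
    rw [← h]
    exact Finset.single_le_sum (f := fun k => Complex.normSq (ent U k b))
      (fun k _ => Complex.normSq_nonneg _) (Finset.mem_univ a)
  have h2 : ‖ent U a b‖ ^ 2 ≤ 1 := by
    rw [← Complex.sq_norm] at h1; exact h1
  nlinarith [norm_nonneg (ent U a b)]

lemma norm_psi_le_one (U : UG N) (x : Fin t → Fin N × Fin N) : ‖psi U x‖ ≤ 1 := by
  rw [psi, norm_prod]
  exact Finset.prod_le_one (fun i _ => norm_nonneg _) (fun i _ => norm_ent_le_one _ _ _)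

lemma norm_trc_pow_le (U : UG N) : ‖(trc U)^t‖ ≤ (N:ℝ)^t := by
  rw [norm_pow]
  refine pow_le_pow_left₀ (norm_nonneg _) ?_ t
  rw [trc]
  calc ‖∑ j, ent U j j‖ ≤ ∑ j, ‖ent U j j‖ := norm_sum_le _ _
    _ ≤ ∑ _j : Fin N, (1:ℝ) := Finset.sum_le_sum fun j _ => norm_ent_le_one U j j
    _ = (N:ℝ) := by simp

variable (μ : Measure (UG N)) [IsProbabilityMeasure μ]

lemma integrable_bdd {f : UG N → ℂ} (hf : Measurable f) {C : ℝ} (hC : ∀ U, ‖f U‖ ≤ C) :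
    Integrable f μ :=
  (integrable_const C).mono' hf.aestronglyMeasurable (Filter.Eventually.of_forall hC)

lemma int_psi2 (x y : Fin t → Fin N × Fin N) :
    Integrable (fun U => psi U x * star (psi U y)) μ := by
  refine integrable_bdd μ ((meas_psi x).mul (meas_star (meas_psi y))) (C := 1) (fun U => ?_)
  rw [norm_mul, norm_star]
  exact mul_le_one₀ (norm_psi_le_one U x) (norm_nonneg _) (norm_psi_le_one U y)

lemma int_trc_psi (c d : Fin t → Fin N) :
    Integrable (fun W => (trc W)^t * star (psi W (pr c d))) μ := by
  refine integrable_bdd μ ((meas_trc.pow_const t).mul (meas_star (meas_psi _)))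
    (C := (N:ℝ)^t) (fun U => ?_)
  rw [norm_mul, norm_star]
  calc ‖(trc U)^t‖ * ‖psi U (pr c d)‖ ≤ ((N:ℝ)^t) * 1 :=
        mul_le_mul (norm_trc_pow_le U) (norm_psi_le_one _ _) (norm_nonneg _)
          (by positivity)
    _ = (N:ℝ)^t := mul_one _

lemma meas_mul_left (V : UG N) : Measurable (fun U : UG N => V * U) := by
  have h : Measurable fun (U : UG N) =>
      ((V : Matrix (Fin N) (Fin N) ℂ) * (U : Matrix (Fin N) (Fin N) ℂ)) := by
    apply measurable_pi_lambda
    intro a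
    apply measurable_pi_lambda
    intro b
    simp only [Matrix.mul_apply]
    exact Finset.measurable_sum _ (fun k _ => ((meas_ent k b).const_mul _))
  exact h.subtype_mk

lemma meas_inv : Measurable (fun U : UG N => U⁻¹) := by
  have h : Measurable fun (U : UG N) => (star (U : Matrix (Fin N) (Fin N) ℂ)) := by
    apply measurable_pi_lambda
    intro a
    apply measurable_pi_lambda
    intro b
    exact continuous_star.measurable.comp (meas_ent b a)
  exact h.subtype_mk

omit [IsProbabilityMeasure μ] in
lemma int_left (hleft : ∀ V : UG N, μ.map (fun U => V * U) = μ)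
    (V : UG N) {f : UG N → ℂ} (hf : Measurable f) :
    ∫ U, f (V * U) ∂μ = ∫ U, f U ∂μ := by
  conv_rhs => rw [← hleft V]
  rw [integral_map (meas_mul_left V).aemeasurable hf.aestronglyMeasurable]

omit [IsProbabilityMeasure μ] in
lemma int_inv (hinv : μ.map (fun U => U⁻¹) = μ) {f : UG N → ℂ} (hf : Measurable f) :
    ∫ U, f U⁻¹ ∂μ = ∫ U, f U ∂μ := by
  conv_rhs => rw [← hinv]
  rw [integral_map meas_inv.aemeasurable hf.aestronglyMeasurable]

end Meas


section Core

variable (μ : Measure (UG N)) [IsProbabilityMeasure μ]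

/-- `F̄_{cd} = N^{-t} ∫ (tr W)^t ∏_i conj(W_{c_i d_i}) dμ(W)` -/
noncomputable def Fb (c d : Fin t → Fin N) : ℂ :=
  ((N:ℂ)^t)⁻¹ * ∫ W, (trc W)^t * star (psi W (pr c d)) ∂μ

/-- the block matrix `I ⊗ F̄` -/
noncomputable def Bh : Matrix (Fin t → Fin N × Fin N) (Fin t → Fin N × Fin N) ℂ :=
  Matrix.of fun y z =>
    (if (fun i => (y i).1) = (fun i => (z i).1) then (1:ℂ) else 0)
      * Fb μ (fun i => (y i).2) (fun i => (z i).2)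

/-- the moment matrix `∫ W^{⊗t} ⊗ conj(W^{⊗t})` -/
noncomputable def Mt : Matrix ((Fin t → Fin N) × (Fin t → Fin N))
    ((Fin t → Fin N) × (Fin t → Fin N)) ℂ :=
  Matrix.of fun p q => ∫ W, psi W (pr p.1 q.1) * star (psi W (pr p.2 q.2)) ∂μ

lemma Mt_apply (p q : (Fin t → Fin N) × (Fin t → Fin N)) :
    Mt μ p q = ∫ W, psi W (pr p.1 q.1) * star (psi W (pr p.2 q.2)) ∂μ := rfl

omit [IsProbabilityMeasure μ] in
lemma rho_apply (x y : Fin t → Fin N × Fin N) :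
    rhoHaar N t μ x y = ((N:ℂ)^t)⁻¹ * ∫ U, psi U x * star (psi U y) ∂μ := by
  show (∫ U, _ ∂μ) = _
  rw [← integral_const_mul]
  refine integral_congr_ae (Filter.Eventually.of_forall fun U => ?_)
  dsimp only
  rw [integrand_eq, psi_eq_psiM, psi_eq_psiM]

lemma star_cN : star (((N:ℂ)^t)⁻¹) = ((N:ℂ)^t)⁻¹ := by
  rw [star_inv₀, star_pow, Complex.star_def, Complex.conj_natCast]

omit [IsProbabilityMeasure μ] in
lemma rho_herm : (rhoHaar N t μ)ᴴ = rhoHaar N t μ := by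
  ext x y
  rw [Matrix.conjTranspose_apply, rho_apply, rho_apply, star_mul', star_cN]
  congr 1
  rw [Complex.star_def, ← integral_conj]
  refine integral_congr_ae (Filter.Eventually.of_forall fun U => ?_)
  simp [_root_.map_mul, Complex.star_def, mul_comm]

omit [IsProbabilityMeasure μ] in
lemma rho_perm (π : Equiv.Perm (Fin t)) (x y : Fin t → Fin N × Fin N) :
    rhoHaar N t μ (x ∘ π) y = rhoHaar N t μ x y := by
  rw [rho_apply, rho_apply]
  congr 2
  refine funext fun U => ?_
  congr 1
  rw [psi, psi]
  exact Equiv.prod_comp π (fun i => ent U (x i).1 (x i).2)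

lemma key1 (hleft : ∀ V : UG N, μ.map (fun U => V * U) = μ)
    (U : UG N) (z : Fin t → Fin N × Fin N) :
    ∑ y, star (psi U y) * rhoHaar N t μ y z
      = ∑ c, star (psi U (pr (fun i => (z i).1) c)) * Fb μ c (fun i => (z i).2) := by
  have hsum : ∀ V : UG N, ∑ y : Fin t → Fin N × Fin N, star (psi U y) * psi V y
      = (∑ p : Fin N × Fin N, star (ent U p.1 p.2) * ent V p.1 p.2)^t := by
    intro V
    have h1 : ∀ y : Fin t → Fin N × Fin N, star (psi U y) * psi V y
        = ∏ i, (star (ent U (y i).1 (y i).2) * ent V (y i).1 (y i).2) := by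
      intro y
      rw [star_psi]
      rw [show psi V y = ∏ i, ent V (y i).1 (y i).2 from rfl, ← Finset.prod_mul_distrib]
    simp_rw [h1]
    rw [← Fintype.prod_sum
      (fun (_i : Fin t) (b : Fin N × Fin N) => star (ent U b.1 b.2) * ent V b.1 b.2)]
    rw [Finset.prod_const, Finset.card_univ, Fintype.card_fin]
  have hmeas : Measurable (fun V : UG N => ((N:ℂ)^t)⁻¹
      * ((∑ p : Fin N × Fin N, star (ent U p.1 p.2) * ent V p.1 p.2)^t * star (psi V z))) := by
    refine Measurable.const_mul (Measurable.mul ?_ (meas_star (meas_psi z))) _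
    exact (Finset.measurable_sum _ (fun p _ => (meas_ent p.1 p.2).const_mul _)).pow_const t
  calc ∑ y, star (psi U y) * rhoHaar N t μ y z
      = ∑ y, ∫ V, (star (psi U y) * ((N:ℂ)^t)⁻¹) * (psi V y * star (psi V z)) ∂μ := by
        refine Finset.sum_congr rfl fun y _ => ?_
        rw [rho_apply, ← mul_assoc, ← integral_const_mul]
    _ = ∫ V, ∑ y, (star (psi U y) * ((N:ℂ)^t)⁻¹) * (psi V y * star (psi V z)) ∂μ :=
        (integral_finset_sum _ fun y _ => (int_psi2 μ y z).const_mul _).symm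
    _ = ∫ V, ((N:ℂ)^t)⁻¹
        * ((∑ p : Fin N × Fin N, star (ent U p.1 p.2) * ent V p.1 p.2)^t
            * star (psi V z)) ∂μ := by
        refine integral_congr_ae (Filter.Eventually.of_forall fun V => ?_)
        have h2 : ∀ y : Fin t → Fin N × Fin N, (star (psi U y) * ((N:ℂ)^t)⁻¹) * (psi V y * star (psi V z))
            = ((N:ℂ)^t)⁻¹ * ((star (psi U y) * psi V y) * star (psi V z)) := fun y => by ring
        simp_rw [h2, ← Finset.mul_sum, ← Finset.sum_mul, hsum]
    _ = ∫ V, ((N:ℂ)^t)⁻¹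
        * ((∑ p : Fin N × Fin N, star (ent U p.1 p.2) * ent (U * V) p.1 p.2)^t
            * star (psi (U * V) z)) ∂μ := (int_left μ hleft U hmeas).symm
    _ = ∑ c, star (psi U (pr (fun i => (z i).1) c)) * Fb μ c (fun i => (z i).2) := by
        have hgUV : ∀ V : UG N, ((N:ℂ)^t)⁻¹
            * ((∑ p : Fin N × Fin N, star (ent U p.1 p.2) * ent (U * V) p.1 p.2)^t
                * star (psi (U * V) z))
            = ∑ c, star (psi U (pr (fun i => (z i).1) c))
                * (((N:ℂ)^t)⁻¹ * ((trc V)^t * star (psi V (pr c (fun i => (z i).2))))) := by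
          intro V
          rw [sum_star_ent_mul]
          have hz0 : pr (fun i => (z i).1) (fun i => (z i).2) = z := rfl
          have hz := psi_mul U V (fun i => (z i).1) (fun i => (z i).2)
          rw [hz0] at hz
          rw [hz, star_sum, Finset.mul_sum, Finset.mul_sum]
          refine Finset.sum_congr rfl fun c _ => ?_
          rw [star_mul']
          ring
        simp_rw [hgUV]
        rw [integral_finset_sum _
          (fun c _ => ((int_trc_psi μ c (fun i => (z i).2)).const_mul _).const_mul _)]
        refine Finset.sum_congr rfl fun c _ => ?_
        rw [integral_const_mul, integral_const_mul]
        rfl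


lemma rho_mul_Bh (hleft : ∀ V : UG N, μ.map (fun U => V * U) = μ) :
    rhoHaar N t μ * rhoHaar N t μ = rhoHaar N t μ * Bh μ := by
  ext x z
  rw [Matrix.mul_apply, Matrix.mul_apply]
  have hLHS : ∑ y, rhoHaar N t μ x y * rhoHaar N t μ y z
      = ∑ c, rhoHaar N t μ x (pr (fun i => (z i).1) c) * Fb μ c (fun i => (z i).2) := by
    calc ∑ y, rhoHaar N t μ x y * rhoHaar N t μ y z
        = ∑ y : Fin t → Fin N × Fin N,
            ∫ U, (((N:ℂ)^t)⁻¹ * rhoHaar N t μ y z) * (psi U x * star (psi U y)) ∂μ := by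
          refine Finset.sum_congr rfl fun y _ => ?_
          rw [rho_apply μ x y]
          have h0 : ∀ I r : ℂ, (((N:ℂ)^t)⁻¹ * I) * r = (((N:ℂ)^t)⁻¹ * r) * I :=
            fun I r => by ring
          rw [h0, ← integral_const_mul]
      _ = ∫ U, ∑ y : Fin t → Fin N × Fin N,
            (((N:ℂ)^t)⁻¹ * rhoHaar N t μ y z) * (psi U x * star (psi U y)) ∂μ :=
          (integral_finset_sum _ fun y _ => (int_psi2 μ x y).const_mul _).symm
      _ = ∫ U, ((N:ℂ)^t)⁻¹
            * (psi U x * ∑ y : Fin t → Fin N × Fin N, star (psi U y) * rhoHaar N t μ y z) ∂μ := by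
          refine integral_congr_ae (Filter.Eventually.of_forall fun U => ?_)
          dsimp only
          have h2 : ∀ y : Fin t → Fin N × Fin N,
              (((N:ℂ)^t)⁻¹ * rhoHaar N t μ y z) * (psi U x * star (psi U y))
              = ((N:ℂ)^t)⁻¹ * (psi U x * (star (psi U y) * rhoHaar N t μ y z)) :=
            fun y => by ring
          simp_rw [h2, ← Finset.mul_sum]
      _ = ∫ U, ((N:ℂ)^t)⁻¹ * (psi U x * ∑ c, star (psi U (pr (fun i => (z i).1) c))
            * Fb μ c (fun i => (z i).2)) ∂μ := by
          refine integral_congr_ae (Filter.Eventually.of_forall fun U => ?_)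
          dsimp only
          rw [key1 μ hleft U z]
      _ = ∑ c, rhoHaar N t μ x (pr (fun i => (z i).1) c) * Fb μ c (fun i => (z i).2) := by
          have h3 : ∀ U : UG N, ((N:ℂ)^t)⁻¹ * (psi U x * ∑ c, star (psi U (pr (fun i => (z i).1) c))
              * Fb μ c (fun i => (z i).2))
              = ∑ c, (Fb μ c (fun i => (z i).2) * ((N:ℂ)^t)⁻¹)
                  * (psi U x * star (psi U (pr (fun i => (z i).1) c))) := by
            intro U
            rw [Finset.mul_sum, Finset.mul_sum]
            refine Finset.sum_congr rfl fun c _ => by ring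
          simp_rw [h3]
          rw [integral_finset_sum _
            (fun c _ => (int_psi2 μ x (pr (fun i => (z i).1) c)).const_mul _)]
          refine Finset.sum_congr rfl fun c _ => ?_
          rw [integral_const_mul, rho_apply]
          ring
  rw [hLHS]
  have hRHS : ∑ y, rhoHaar N t μ x y * Bh μ y z
      = ∑ c, rhoHaar N t μ x (pr (fun i => (z i).1) c) * Fb μ c (fun i => (z i).2) := by
    rw [← Equiv.sum_comp (Equiv.arrowProdEquivProdArrow (Fin t) (fun _ => Fin N) (fun _ => Fin N)).symm
      (fun y => rhoHaar N t μ x y * Bh μ y z), Fintype.sum_prod_type]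
    have hBh : ∀ (a c : Fin t → Fin N),
        Bh μ ((Equiv.arrowProdEquivProdArrow (Fin t) (fun _ => Fin N) (fun _ => Fin N)).symm (a, c)) z
        = (if a = (fun i => (z i).1) then (1:ℂ) else 0) * Fb μ c (fun i => (z i).2) := by
      intro a c
      simp [Bh, Equiv.arrowProdEquivProdArrow]
    simp_rw [hBh]
    rw [Finset.sum_comm]
    refine Finset.sum_congr rfl fun c _ => ?_
    rw [Finset.sum_eq_single ((fun i => (z i).1) : Fin t → Fin N)]
    · rw [if_pos rfl, one_mul]
      rfl
    · intro a _ ha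
      simp [ha]
    · intro h
      exact absurd (Finset.mem_univ _) h
  rw [hRHS]


omit [IsProbabilityMeasure μ] in
lemma int_star (f : UG N → ℂ) : ∫ U, star (f U) ∂μ = star (∫ U, f U ∂μ) := by
  have h := integral_conj (μ := μ) (f := f)
  simpa only [← Complex.star_def] using h

lemma Fb_star (hinv : μ.map (fun U => U⁻¹) = μ) (c d : Fin t → Fin N) :
    star (Fb μ d c) = Fb μ c d := by
  rw [Fb, Fb, star_mul', star_cN]
  congr 1
  rw [← int_star]
  have hmeas : Measurable (fun W : UG N => (trc W)^t * star (psi W (pr c d))) :=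
    (meas_trc.pow_const t).mul (meas_star (meas_psi _))
  conv_rhs => rw [← int_inv μ hinv hmeas]
  refine integral_congr_ae (Filter.Eventually.of_forall fun W => ?_)
  dsimp only
  rw [star_mul', star_star, star_pow, trc_inv, psi_inv, star_star]

lemma Bh_herm (hinv : μ.map (fun U => U⁻¹) = μ) : (Bh (t := t) μ)ᴴ = Bh μ := by
  ext y z
  rw [Matrix.conjTranspose_apply]
  show star ((if (fun i => (z i).1) = (fun i => (y i).1) then (1:ℂ) else 0)
      * Fb μ (fun i => (z i).2) (fun i => (y i).2)) = _
  rw [star_mul', Fb_star μ hinv]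
  have h1 : star (if (fun i => (z i).1) = (fun i => (y i).1) then (1:ℂ) else 0)
      = (if (fun i => (y i).1) = (fun i => (z i).1) then (1:ℂ) else 0) := by
    rcases eq_or_ne (fun i => (z i).1) (fun i => (y i).1) with h | h
    · rw [if_pos h, if_pos h.symm, star_one]
    · rw [if_neg h, if_neg (Ne.symm h), star_zero]
  rw [h1]
  rfl

lemma Mt_herm (hinv : μ.map (fun U => U⁻¹) = μ) : (Mt (t := t) μ)ᴴ = Mt μ := by
  ext p q
  rw [Matrix.conjTranspose_apply, Mt_apply, Mt_apply]
  rw [← int_star]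
  have hmeas : Measurable (fun W : UG N => psi W (pr p.1 q.1) * star (psi W (pr p.2 q.2))) :=
    (meas_psi _).mul (meas_star (meas_psi _))
  conv_rhs => rw [← int_inv μ hinv hmeas]
  refine integral_congr_ae (Filter.Eventually.of_forall fun W => ?_)
  dsimp only
  rw [star_mul', star_star, psi_inv, psi_inv, star_star]

/-- claim 3: multiplicativity of the integrand of `Mt` -/
lemma claim3 (V W : UG N) (p q : (Fin t → Fin N) × (Fin t → Fin N)) :
    ∑ r : (Fin t → Fin N) × (Fin t → Fin N),
      (psi V (pr p.1 r.1) * star (psi V (pr p.2 r.2)))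
        * (psi W (pr r.1 q.1) * star (psi W (pr r.2 q.2)))
      = psi (V * W) (pr p.1 q.1) * star (psi (V * W) (pr p.2 q.2)) := by
  rw [Fintype.sum_prod_type, psi_mul V W p.1 q.1]
  have h2 : star (psi (V * W) (pr p.2 q.2))
      = ∑ r2 : Fin t → Fin N, star (psi V (pr p.2 r2)) * star (psi W (pr r2 q.2)) := by
    rw [psi_mul V W p.2 q.2, star_sum]
    exact Finset.sum_congr rfl fun r2 _ => star_mul' _ _
  rw [h2, Finset.sum_mul_sum]
  refine Finset.sum_congr rfl fun r1 _ => Finset.sum_congr rfl fun r2 _ => by ring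

lemma Mt_idem (hleft : ∀ V : UG N, μ.map (fun U => V * U) = μ) :
    Mt (t := t) μ * Mt μ = Mt μ := by
  ext p q
  rw [Matrix.mul_apply]
  have hmeasMt : ∀ (a b : (Fin t → Fin N) × (Fin t → Fin N)),
      Measurable (fun W : UG N => psi W (pr a.1 b.1) * star (psi W (pr a.2 b.2))) :=
    fun a b => (meas_psi _).mul (meas_star (meas_psi _))
  calc ∑ r, Mt μ p r * Mt μ r q
      = ∑ r : (Fin t → Fin N) × (Fin t → Fin N),
          ∫ V, (psi V (pr p.1 r.1) * star (psi V (pr p.2 r.2))) * Mt μ r q ∂μ := by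
        refine Finset.sum_congr rfl fun r _ => ?_
        rw [Mt_apply μ p r, ← integral_mul_const]
    _ = ∫ V, ∑ r : (Fin t → Fin N) × (Fin t → Fin N),
          (psi V (pr p.1 r.1) * star (psi V (pr p.2 r.2))) * Mt μ r q ∂μ :=
        (integral_finset_sum _ fun r _ =>
          (int_psi2 μ (pr p.1 r.1) (pr p.2 r.2)).mul_const _).symm
    _ = ∫ V, ∫ W, ∑ r : (Fin t → Fin N) × (Fin t → Fin N),
          (psi V (pr p.1 r.1) * star (psi V (pr p.2 r.2)))
            * (psi W (pr r.1 q.1) * star (psi W (pr r.2 q.2))) ∂μ ∂μ := by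
        refine integral_congr_ae (Filter.Eventually.of_forall fun V => ?_)
        dsimp only
        rw [integral_finset_sum _ (fun r _ =>
          (int_psi2 μ (pr r.1 q.1) (pr r.2 q.2)).const_mul _)]
        refine Finset.sum_congr rfl fun r _ => ?_
        rw [Mt_apply, integral_const_mul]
    _ = ∫ V, ∫ W, psi (V * W) (pr p.1 q.1) * star (psi (V * W) (pr p.2 q.2)) ∂μ ∂μ := by
        refine integral_congr_ae (Filter.Eventually.of_forall fun V => ?_)
        dsimp only
        exact integral_congr_ae (Filter.Eventually.of_forall fun W => claim3 V W p q)
    _ = ∫ _V, Mt μ p q ∂μ := by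
        refine integral_congr_ae (Filter.Eventually.of_forall fun V => ?_)
        dsimp only
        rw [Mt_apply]
        exact int_left μ hleft V (hmeasMt p q)
    _ = Mt μ p q := by
        rw [integral_const, probReal_univ]
        simp

noncomputable def xiv : (Fin t → Fin N) × (Fin t → Fin N) → ℂ :=
  fun p => if p.1 = p.2 then 1 else 0

lemma star_xiv : star (xiv (N := N) (t := t)) = xiv := by
  funext p
  rw [Pi.star_apply, xiv]
  split_ifs <;> simp

lemma Mt_fix : (Mt (t := t) μ).mulVec xiv = xiv := by
  funext p
  show ∑ q, Mt μ p q * xiv q = xiv p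
  rw [Fintype.sum_prod_type]
  have h1 : ∀ g h : Fin t → Fin N, Mt μ p (g, h) * xiv (g, h)
      = if g = h then Mt μ p (g, h) else 0 := by
    intro g h
    rw [xiv]
    split_ifs <;> simp
  simp_rw [h1, Finset.sum_ite_eq]
  simp only [Finset.mem_univ, if_true]
  have h2 : ∑ g : Fin t → Fin N, Mt μ p (g, g)
      = ∫ W, ∑ g : Fin t → Fin N, psi W (pr p.1 g) * star (psi W (pr p.2 g)) ∂μ := by
    rw [integral_finset_sum _ (fun g _ => int_psi2 μ (pr p.1 g) (pr p.2 g))]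
    rfl
  rw [h2]
  have h3 : ∀ W : UG N, ∑ g : Fin t → Fin N, psi W (pr p.1 g) * star (psi W (pr p.2 g))
      = if p.1 = p.2 then (1:ℂ) else 0 := fun W => sum_psi_star_psi W p.1 p.2
  simp_rw [h3]
  rw [integral_const, probReal_univ]
  simp [xiv]


lemma dot_form (M : Matrix ((Fin t → Fin N) × (Fin t → Fin N))
    ((Fin t → Fin N) × (Fin t → Fin N)) ℂ) (ζ : (Fin t → Fin N) × (Fin t → Fin N) → ℂ) :
    star ζ ⬝ᵥ M.mulVec ζ = ∑ p, ∑ q, star (ζ p) * M p q * ζ q := by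
  rw [dotProduct]
  refine Finset.sum_congr rfl fun p _ => ?_
  rw [Matrix.mulVec, dotProduct, Finset.mul_sum, Pi.star_apply]
  refine Finset.sum_congr rfl fun q _ => by ring

lemma Mt_bound (hleft : ∀ V : UG N, μ.map (fun U => V * U) = μ)
    (hinv : μ.map (fun U => U⁻¹) = μ)
    (ζ : (Fin t → Fin N) × (Fin t → Fin N) → ℂ) :
    Complex.normSq (∑ g : Fin t → Fin N, ζ (g, g))
      ≤ (Fintype.card (Fin t → Fin N) : ℝ)
        * (∑ p, ∑ q, star (ζ p) * Mt μ p q * ζ q).re := by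
  rw [← dot_form]
  set w := (Mt μ).mulVec ζ with hw
  have hvm : xiv ᵥ* Mt (t := t) μ = xiv := by
    have h := Matrix.star_mulVec (M := (Mt (t := t) μ)ᴴ) (v := xiv)
    rw [Matrix.conjTranspose_conjTranspose, Mt_herm μ hinv, Mt_fix, star_xiv] at h
    exact h.symm
  have hdiag : ∀ u : (Fin t → Fin N) × (Fin t → Fin N) → ℂ,
      xiv ⬝ᵥ u = ∑ g : Fin t → Fin N, u (g, g) := by
    intro u
    rw [dotProduct, Fintype.sum_prod_type]
    have h1 : ∀ g h : Fin t → Fin N, xiv (g, h) * u (g, h)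
        = if g = h then u (g, h) else 0 := by
      intro g h
      rw [xiv]
      split_ifs <;> simp
    simp_rw [h1, Finset.sum_ite_eq]
    simp
  have hzw : ∑ g : Fin t → Fin N, ζ (g, g) = ∑ g : Fin t → Fin N, w (g, g) := by
    rw [← hdiag ζ, ← hdiag w, hw, dotProduct_mulVec, hvm]
  have hsw : star ζ ᵥ* Mt μ = star w := by
    have h := Matrix.star_mulVec (M := Mt (t := t) μ) (v := ζ)
    rw [Mt_herm μ hinv] at h
    exact h.symm
  have h1 : star ζ ⬝ᵥ w = star w ⬝ᵥ w := by
    conv_lhs => rw [hw, ← Mt_idem μ hleft, ← Matrix.mulVec_mulVec]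
    rw [dotProduct_mulVec, hsw]
  have hre : (star ζ ⬝ᵥ w).re = ∑ p, Complex.normSq (w p) := by
    rw [h1, dotProduct, Complex.re_sum]
    refine Finset.sum_congr rfl fun p _ => ?_
    rw [Pi.star_apply, mul_comm, Complex.star_def, Complex.mul_conj]
    exact Complex.ofReal_re _
  rw [hre, hzw]
  have hcs1 : ‖∑ g : Fin t → Fin N, w (g, g)‖
      ≤ ∑ g : Fin t → Fin N, ‖w (g, g)‖ := by
    simpa using norm_sum_le Finset.univ (fun g : Fin t → Fin N => w (g, g))
  have hcs2 : (∑ g : Fin t → Fin N, ‖w (g, g)‖)^2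
      ≤ (Fintype.card (Fin t → Fin N) : ℝ)
        * ∑ g : Fin t → Fin N, (‖w (g, g)‖)^2 := by
    have h := Finset.sum_mul_sq_le_sq_mul_sq Finset.univ (fun _ : Fin t → Fin N => (1:ℝ))
      (fun g => ‖w (g, g)‖)
    simpa [Finset.card_univ] using h
  have hcs3 : ∑ g : Fin t → Fin N, (‖w (g, g)‖)^2
      ≤ ∑ p : (Fin t → Fin N) × (Fin t → Fin N), Complex.normSq (w p) := by
    rw [Fintype.sum_prod_type]
    have := fun (g : Fin t → Fin N) => Finset.single_le_sum
      (f := fun h : Fin t → Fin N => Complex.normSq (w (g, h)))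
      (fun h _ => Complex.normSq_nonneg _) (Finset.mem_univ g)
    refine Finset.sum_le_sum fun g _ => ?_
    rw [Complex.sq_norm]
    exact this g
  calc Complex.normSq (∑ g : Fin t → Fin N, w (g, g))
      = (‖∑ g : Fin t → Fin N, w (g, g)‖)^2 := (Complex.sq_norm _).symm
    _ ≤ (∑ g : Fin t → Fin N, ‖w (g, g)‖)^2 := by
        have h0 : (0:ℝ) ≤ ‖∑ g : Fin t → Fin N, w (g, g)‖ := norm_nonneg _
        exact pow_le_pow_left₀ h0 hcs1 2
    _ ≤ (Fintype.card (Fin t → Fin N) : ℝ)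
        * ∑ g : Fin t → Fin N, (‖w (g, g)‖)^2 := hcs2
    _ ≤ (Fintype.card (Fin t → Fin N) : ℝ)
        * ∑ p : (Fin t → Fin N) × (Fin t → Fin N), Complex.normSq (w p) := by
        exact mul_le_mul_of_nonneg_left hcs3 (Nat.cast_nonneg _)


lemma swap3 (f : (Fin t → Fin N) → (Fin t → Fin N) → (Fin t → Fin N) → ℂ) :
    ∑ c, ∑ d, ∑ e, f c d e = ∑ e, ∑ c, ∑ d, f c d e := by
  calc ∑ c, ∑ d, ∑ e, f c d e
      = ∑ c, ∑ e, ∑ d, f c d e := Finset.sum_congr rfl (fun c _ => Finset.sum_comm)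
    _ = ∑ e, ∑ c, ∑ d, f c d e := Finset.sum_comm

lemma Fb_bound (hleft : ∀ V : UG N, μ.map (fun U => V * U) = μ)
    (hinv : μ.map (fun U => U⁻¹) = μ) (u : (Fin t → Fin N) → ℂ) :
    ((N:ℝ)^(2*t))⁻¹ * ∑ c : Fin t → Fin N, Complex.normSq (u c)
      ≤ (∑ c : Fin t → Fin N, ∑ d : Fin t → Fin N, star (u c) * Fb μ c d * u d).re := by
  by_cases hJ : Nonempty (Fin t → Fin N)
  swap
  · rw [not_nonempty_iff] at hJ
    simp [Finset.univ_eq_empty]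
  -- the test vectors
  set ζ : (Fin t → Fin N) → ((Fin t → Fin N) × (Fin t → Fin N)) → ℂ :=
    fun e p => (if p.1 = e then (1:ℂ) else 0) * u p.2 with hζ
  have hζstar : ∀ e g c, star (ζ e (g, c)) = (if g = e then (1:ℂ) else 0) * star (u c) := by
    intro e g c
    rw [hζ]
    dsimp only
    rw [star_mul']
    congr 1
    split_ifs <;> simp
  have hz : ∀ e : Fin t → Fin N, ∑ p, ∑ q, star (ζ e p) * Mt μ p q * ζ e q
      = ∑ c : Fin t → Fin N, ∑ d : Fin t → Fin N,
          (star (u c) * u d) * Mt μ (e, c) (e, d) := by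
    intro e
    rw [Fintype.sum_prod_type]
    rw [Finset.sum_eq_single e]
    rotate_left
    · intro g _ hg
      refine Finset.sum_eq_zero fun c _ => ?_
      refine Finset.sum_eq_zero fun q _ => ?_
      rw [hζstar, if_neg hg, zero_mul, zero_mul, zero_mul]
    · intro h
      exact absurd (Finset.mem_univ _) h
    refine Finset.sum_congr rfl fun c _ => ?_
    rw [Fintype.sum_prod_type]
    rw [Finset.sum_eq_single e]
    rotate_left
    · intro h _ hh
      refine Finset.sum_eq_zero fun d _ => ?_
      have : ζ e (h, d) = 0 := by
        rw [hζ]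
        dsimp only
        rw [if_neg hh, zero_mul]
      rw [this, mul_zero]
    · intro h
      exact absurd (Finset.mem_univ _) h
    refine Finset.sum_congr rfl fun d _ => ?_
    rw [hζstar, if_pos rfl, one_mul]
    have : ζ e (e, d) = u d := by
      rw [hζ]
      dsimp only
      rw [if_pos rfl, one_mul]
    rw [this]
    ring
  -- main expansion of the quadratic form
  have hS : ∑ c : Fin t → Fin N, ∑ d : Fin t → Fin N, star (u c) * Fb μ c d * u d
      = ((N:ℂ)^t)⁻¹ * ∑ e : Fin t → Fin N,
          (∑ p, ∑ q, star (ζ e p) * Mt μ p q * ζ e q) := by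
    have h1 : ∀ c d : Fin t → Fin N, star (u c) * Fb μ c d * u d
        = ((N:ℂ)^t)⁻¹
          * ∫ W, (star (u c) * u d) * ((trc W)^t * star (psi W (pr c d))) ∂μ := by
      intro c d
      rw [Fb, integral_const_mul]
      ring
    simp_rw [h1, ← Finset.mul_sum]
    congr 1
    have h2 : ∀ c : Fin t → Fin N,
        ∑ d : Fin t → Fin N, ∫ W, (star (u c) * u d) * ((trc W)^t * star (psi W (pr c d))) ∂μ
        = ∫ W, ∑ d : Fin t → Fin N,
            (star (u c) * u d) * ((trc W)^t * star (psi W (pr c d))) ∂μ := by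
      intro c
      exact (integral_finset_sum _ fun d _ => (int_trc_psi μ c d).const_mul _).symm
    simp_rw [h2]
    rw [← integral_finset_sum _ (fun c _ => integrable_finset_sum _
      (fun d _ => (int_trc_psi μ c d).const_mul _))]
    have h3 : ∀ W : UG N, ∑ c : Fin t → Fin N, ∑ d : Fin t → Fin N,
        (star (u c) * u d) * ((trc W)^t * star (psi W (pr c d)))
        = ∑ e : Fin t → Fin N, ∑ c : Fin t → Fin N, ∑ d : Fin t → Fin N,
            (star (u c) * u d) * (psi W (pr e e) * star (psi W (pr c d))) := by
      intro W
      rw [← swap3]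
      refine Finset.sum_congr rfl fun c _ => Finset.sum_congr rfl fun d _ => ?_
      rw [trc_pow, Finset.sum_mul, Finset.mul_sum]
    have h4 : (∫ W, ∑ c : Fin t → Fin N, ∑ d : Fin t → Fin N,
        (star (u c) * u d) * ((trc W)^t * star (psi W (pr c d))) ∂μ)
        = ∑ e : Fin t → Fin N, ∫ W, ∑ c : Fin t → Fin N, ∑ d : Fin t → Fin N,
            (star (u c) * u d) * (psi W (pr e e) * star (psi W (pr c d))) ∂μ := by
      rw [integral_congr_ae (Filter.Eventually.of_forall fun W => h3 W)]
      exact integral_finset_sum _ (fun e _ => integrable_finset_sum _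
        (fun c _ => integrable_finset_sum _
          (fun d _ => (int_psi2 μ (pr e e) (pr c d)).const_mul _)))
    rw [h4]
    refine Finset.sum_congr rfl fun e _ => ?_
    rw [hz e]
    rw [integral_finset_sum _ (fun c _ => integrable_finset_sum _
      (fun d _ => (int_psi2 μ (pr e e) (pr c d)).const_mul _))]
    refine Finset.sum_congr rfl fun c _ => ?_
    rw [integral_finset_sum _ (fun d _ => (int_psi2 μ (pr e e) (pr c d)).const_mul _)]
    refine Finset.sum_congr rfl fun d _ => ?_
    rw [integral_const_mul, Mt_apply]
  -- conclusion
  have hn : (Fintype.card (Fin t → Fin N) : ℝ) = (N:ℝ)^t := by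
    rw [Fintype.card_fun]
    simp
  have hnpos : (0:ℝ) < (N:ℝ)^t := by
    rw [← hn]
    exact_mod_cast Fintype.card_pos
  have hdiagζ : ∀ e : Fin t → Fin N, ∑ g : Fin t → Fin N, ζ e (g, g) = u e := by
    intro e
    have h5 : ∀ g : Fin t → Fin N, ζ e (g, g) = if g = e then u g else 0 := by
      intro g
      rw [hζ]
      dsimp only
      split_ifs <;> simp
    simp_rw [h5]
    rw [Finset.sum_ite_eq']
    simp
  have hbound : ∀ e : Fin t → Fin N, Complex.normSq (u e)
      ≤ ((N:ℝ)^t) * (∑ p, ∑ q, star (ζ e p) * Mt μ p q * ζ e q).re := by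
    intro e
    have h := Mt_bound μ hleft hinv (ζ e)
    rw [hdiagζ e, hn] at h
    exact h
  have hcast : ((N:ℂ)^t)⁻¹ = ((((N:ℝ)^t)⁻¹ : ℝ) : ℂ) := by
    push_cast
    norm_num
  rw [hS, hcast]
  have hre0 : ∀ (r : ℝ) (z : ℂ), ((r : ℂ) * z).re = r * z.re := by
    intro r z
    rw [Complex.mul_re, Complex.ofReal_re, Complex.ofReal_im]
    ring
  rw [hre0, Complex.re_sum]
  have hsum : ∑ c : Fin t → Fin N, Complex.normSq (u c)
      ≤ ((N:ℝ)^t) * ∑ e : Fin t → Fin N,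
          (∑ p, ∑ q, star (ζ e p) * Mt μ p q * ζ e q).re := by
    rw [Finset.mul_sum]
    exact Finset.sum_le_sum fun e _ => hbound e
  have hpow : ((N:ℝ)^(2*t)) = ((N:ℝ)^t)^2 := by
    rw [← pow_mul, mul_comm]
  rw [hpow]
  set n : ℝ := (N:ℝ)^t
  set R : ℝ := ∑ e : Fin t → Fin N, (∑ p, ∑ q, star (ζ e p) * Mt μ p q * ζ e q).re
  set Stot : ℝ := ∑ c : Fin t → Fin N, Complex.normSq (u c)
  -- goal : (n^2)⁻¹ * Stot ≤ n⁻¹ * R, from Stot ≤ n * R, n > 0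
  rw [show (n^2)⁻¹ * Stot = n⁻¹ * (n⁻¹ * Stot) by rw [sq, mul_inv]; ring]
  refine mul_le_mul_of_nonneg_left ?_ (by positivity)
  rw [inv_mul_le_iff₀ hnpos]
  exact hsum


lemma dot_form2 {m : Type*} [Fintype m] (M : Matrix m m ℂ) (ζ : m → ℂ) :
    star ζ ⬝ᵥ M.mulVec ζ = ∑ p, ∑ q, star (ζ p) * M p q * ζ q := by
  rw [dotProduct]
  refine Finset.sum_congr rfl fun p _ => ?_
  rw [Matrix.mulVec, dotProduct, Finset.mul_sum, Pi.star_apply]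
  refine Finset.sum_congr rfl fun q _ => by ring

lemma dot_self_re {m : Type*} [Fintype m] (v : m → ℂ) :
    (star v ⬝ᵥ v).re = ∑ p, Complex.normSq (v p) := by
  rw [dotProduct, Complex.re_sum]
  refine Finset.sum_congr rfl fun p _ => ?_
  rw [Pi.star_apply, mul_comm, Complex.star_def, Complex.mul_conj]
  exact Complex.ofReal_re _

lemma Bh_bound (hleft : ∀ V : UG N, μ.map (fun U => V * U) = μ)
    (hinv : μ.map (fun U => U⁻¹) = μ) (v : (Fin t → Fin N × Fin N) → ℂ) :
    ((N:ℝ)^(2*t))⁻¹ * (star v ⬝ᵥ v).re ≤ (star v ⬝ᵥ (Bh μ).mulVec v).re := by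
  have hdot := dot_form2 (Bh μ) v
  set E := Equiv.arrowProdEquivProdArrow (Fin t) (fun _ => Fin N) (fun _ => Fin N) with hE
  have hBh2 : ∀ a c b d : Fin t → Fin N,
      Bh μ (E.symm (a, c)) (E.symm (b, d)) = (if a = b then (1:ℂ) else 0) * Fb μ c d := by
    intro a c b d
    simp [Bh, hE, Equiv.arrowProdEquivProdArrow]
  have hform : star v ⬝ᵥ (Bh μ).mulVec v
      = ∑ a : Fin t → Fin N, ∑ c : Fin t → Fin N, ∑ d : Fin t → Fin N,
          star (v (E.symm (a, c))) * Fb μ c d * v (E.symm (a, d)) := by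
    rw [hdot]
    rw [← Equiv.sum_comp E.symm
      (fun y => ∑ q, star (v y) * Bh μ y q * v q), Fintype.sum_prod_type]
    refine Finset.sum_congr rfl fun a _ => Finset.sum_congr rfl fun c _ => ?_
    rw [← Equiv.sum_comp E.symm
      (fun q => star (v (E.symm (a, c))) * Bh μ (E.symm (a, c)) q * v q),
      Fintype.sum_prod_type]
    rw [Finset.sum_eq_single a]
    rotate_left
    · intro b _ hb
      refine Finset.sum_eq_zero fun d _ => ?_
      rw [hBh2, if_neg (fun h => hb h.symm), zero_mul, mul_zero, zero_mul]
    · intro h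
      exact absurd (Finset.mem_univ _) h
    refine Finset.sum_congr rfl fun d _ => ?_
    rw [hBh2, if_pos rfl, one_mul]
  have hnorm : (star v ⬝ᵥ v).re
      = ∑ a : Fin t → Fin N, ∑ c : Fin t → Fin N, Complex.normSq (v (E.symm (a, c))) := by
    rw [dot_self_re]
    rw [← Equiv.sum_comp E.symm (fun y => Complex.normSq (v y)), Fintype.sum_prod_type]
  rw [hform, hnorm, Complex.re_sum, Finset.mul_sum]
  refine Finset.sum_le_sum fun a _ => ?_
  exact Fb_bound μ hleft hinv (fun c => v (E.symm (a, c)))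

end Core

end RhoAux

/-- For `μ` the Haar probability measure on `U(N)`: the support of `ρ_Haar` is contained in the
symmetric subspace `∨^t(ℂ^N⊗ℂ^N)`, and the minimum eigenvalue of `ρ_Haar` restricted to its
support is at least `N^{−2t}` (every `v` in the range satisfies
`⟨v, ρ_Haar v⟩ ≥ N^{−2t}‖v‖²`). -/
theorem rhoHaar_support_min_eigenvalue {N t : ℕ}
    (μ : Measure (Matrix.unitaryGroup (Fin N) ℂ)) [IsProbabilityMeasure μ]
    (hleft : ∀ V : Matrix.unitaryGroup (Fin N) ℂ, μ.map (fun U => V * U) = μ)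
    (hright : ∀ V : Matrix.unitaryGroup (Fin N) ℂ, μ.map (fun U => U * V) = μ)
    (hinv : μ.map (fun U => U⁻¹) = μ) :
    (∀ v ∈ LinearMap.range (Matrix.mulVecLin (rhoHaar N t μ)),
        v ∈ symSubspaceA (Fin N × Fin N) t)
    ∧ ∀ v ∈ LinearMap.range (Matrix.mulVecLin (rhoHaar N t μ)),
        ((N : ℝ) ^ (2 * t))⁻¹ * (dotProduct (star v) v).re
          ≤ (dotProduct (star v) ((rhoHaar N t μ).mulVec v)).re := by
  constructor
  · rintro v ⟨w, rfl⟩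
    have h : ∀ (π : Equiv.Perm (Fin t)) (x : Fin t → Fin N × Fin N),
        (Matrix.mulVecLin (rhoHaar N t μ) w) (x ∘ π)
          = (Matrix.mulVecLin (rhoHaar N t μ) w) x := by
      intro π x
      rw [Matrix.mulVecLin_apply]
      show (rhoHaar N t μ (x ∘ π)) ⬝ᵥ w = (rhoHaar N t μ x) ⬝ᵥ w
      rw [dotProduct, dotProduct]
      refine Finset.sum_congr rfl fun y _ => ?_
      rw [RhoAux.rho_perm μ π x y]
    exact h
  · rintro v ⟨w, rfl⟩
    have h2 : (rhoHaar N t μ * RhoAux.Bh μ)ᴴ = RhoAux.Bh μ * rhoHaar N t μ := by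
      rw [Matrix.conjTranspose_mul, RhoAux.Bh_herm μ hinv, RhoAux.rho_herm]
    have h3 : (rhoHaar N t μ * rhoHaar N t μ)ᴴ = rhoHaar N t μ * rhoHaar N t μ := by
      rw [Matrix.conjTranspose_mul, RhoAux.rho_herm]
    have hB : RhoAux.Bh μ * rhoHaar N t μ = rhoHaar N t μ * rhoHaar N t μ := by
      rw [← h2, ← RhoAux.rho_mul_Bh μ hleft, h3]
    have hv : Matrix.mulVecLin (rhoHaar N t μ) w = (rhoHaar N t μ).mulVec w :=
      Matrix.mulVecLin_apply _ _
    have h4 : (rhoHaar N t μ).mulVec (Matrix.mulVecLin (rhoHaar N t μ) w)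
        = (RhoAux.Bh μ).mulVec (Matrix.mulVecLin (rhoHaar N t μ) w) := by
      rw [hv, Matrix.mulVec_mulVec, Matrix.mulVec_mulVec, ← hB]
    rw [h4]
    exact RhoAux.Bh_bound μ hleft hinv _
end
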